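/- arXiv:1809.06950 — 4 statements merged into one kernel-verified Lean document; each statement's English description precedes it below -/
import Mathlib

section
/- For any graph G on n vertices with m edges, any integer k and real 0 ≤ β ≤ 1, the number of vertex subsets S of size k such that G[S] has at least β·C(k,2) edges is at most m^(μ+1) · n^(k − 2μ + 2), where μ = min{√β/2, 1 − √(1−β)}·k, assuming m, n ≥ 1. -/
open Finset
set_option maxHeartbeats 1600000
set_option linter.unusedSectionVars false
set_option linter.unusedVariables false

namespace EGc



/-- `p` touches vertex `v`. -/
def Tch (v : ℕ) (p : ℕ × ℕ) : Prop := p.1 = v ∨ p.2 = v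

instance (v p) : Decidable (Tch v p) := by unfold Tch; infer_instance

/-- pairwise disjoint family of pairs (a matching). -/
def Disj (A : Finset (ℕ × ℕ)) : Prop :=
  ∀ p ∈ A, ∀ r ∈ A, p ≠ r → ∀ v, Tch v p → ¬ Tch v r

/-- sorted pairs with entries < q -/
def allPairs (q : ℕ) : Finset (ℕ × ℕ) :=
  (range q ×ˢ range q).filter fun p => p.1 < p.2

lemma mem_allPairs {q p} : p ∈ allPairs q ↔ p.1 < p.2 ∧ p.2 < q := by
  simp only [allPairs, mem_filter, mem_product, mem_range]
  constructor
  · rintro ⟨⟨_, h2⟩, h⟩; exact ⟨h, h2⟩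
  · rintro ⟨h, h2⟩; exact ⟨⟨lt_trans h h2, h2⟩, h⟩

lemma card_allPairs (q : ℕ) : (allPairs q).card = q.choose 2 := by
  induction q with
  | zero => simp [allPairs]
  | succ n ih =>
      have hsplit : allPairs (n+1) = allPairs n ∪ (range n).image (fun a => (a, n)) := by
        ext p
        simp only [mem_allPairs, mem_union, mem_image, mem_range]
        constructor
        · rintro ⟨h1, h2⟩
          rcases Nat.lt_succ_iff_lt_or_eq.mp h2 with h | rfl
          · exact Or.inl ⟨h1, h⟩
          · exact Or.inr ⟨p.1, h1, rfl⟩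
        · rintro (⟨h1, h2⟩ | ⟨a, ha, rfl⟩)
          · exact ⟨h1, Nat.lt_succ_of_lt h2⟩
          · exact ⟨ha, Nat.lt_succ_self n⟩
      have hdisj : Disjoint (allPairs n) ((range n).image (fun a => (a, n))) := by
        rw [disjoint_left]
        rintro p hp hq
        simp only [mem_image, mem_range] at hq
        obtain ⟨a, _, rfl⟩ := hq
        exact absurd (mem_allPairs.mp hp).2 (lt_irrefl n)
      rw [hsplit, card_union_of_disjoint hdisj, ih, card_image_of_injective _ (by
        intro a b h; exact congrArg Prod.fst h), card_range]
      rw [Nat.choose_two_right, Nat.choose_two_right]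
      rcases n with _ | m
      · simp
      · rw [Nat.succ_sub_one, Nat.succ_sub_one]
        have : (m + 1 + 1) * (m + 1) = (m+1) * m + 2 * (m+1) := by ring
        omega

def icoPairs (u v : ℕ) : Finset (ℕ × ℕ) :=
  (Ico u v ×ˢ Ico u v).filter fun p => p.1 < p.2

lemma mem_icoPairs {u v p} : p ∈ icoPairs u v ↔ u ≤ p.1 ∧ p.1 < p.2 ∧ p.2 < v := by
  simp only [icoPairs, mem_filter, mem_product, mem_Ico]
  constructor
  · rintro ⟨⟨⟨h1, _⟩, ⟨_, h4⟩⟩, h⟩; exact ⟨h1, h, h4⟩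
  · rintro ⟨h1, h, h4⟩
    exact ⟨⟨⟨h1, lt_trans h h4⟩, ⟨le_trans h1 (le_of_lt h), h4⟩⟩, h⟩

def allPairs' (q : ℕ) : Finset (ℕ × ℕ) :=
  (range q ×ˢ range q).filter fun p => p.1 < p.2

lemma card_icoPairs (u v : ℕ) : (icoPairs u v).card = (v - u).choose 2 := by
  rw [← card_allPairs (v - u)]
  apply card_bij (fun p _ => (p.1 - u, p.2 - u))
  · rintro ⟨a, b⟩ hp
    obtain ⟨h1, h2, h3⟩ := mem_icoPairs.mp hp
    simp only [mem_allPairs]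
    constructor <;> omega
  · rintro ⟨a, b⟩ ha ⟨c, d⟩ hc h
    obtain ⟨h1, h2, h3⟩ := mem_icoPairs.mp ha
    obtain ⟨g1, g2, g3⟩ := mem_icoPairs.mp hc
    simp only [Prod.mk.injEq] at h ⊢
    omega
  · rintro ⟨a, b⟩ hb
    obtain ⟨h1, h2⟩ := mem_allPairs.mp hb
    exact ⟨(a + u, b + u), mem_icoPairs.mpr (by omega), by simp⟩

/-- split of allPairs at first coordinate `l` -/
lemma allPairs_split (q l : ℕ) :
    (allPairs q).card = ((range l ×ˢ range q).filter fun p => p.1 < p.2).card + (q - l).choose 2 := by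
  rw [← card_icoPairs l q]
  rw [← card_union_of_disjoint (by
    rw [disjoint_left]
    rintro ⟨a,b⟩ hp hq
    simp only [mem_filter, mem_product, mem_range] at hp
    have := (mem_icoPairs.mp hq).1
    omega)]
  congr 1
  ext ⟨a, b⟩
  simp only [mem_allPairs, mem_union, mem_filter, mem_product, mem_range, mem_icoPairs]
  constructor
  · rintro ⟨h1, h2⟩
    rcases lt_or_ge a l with h | h
    · exact Or.inl ⟨⟨h, h2⟩, h1⟩
    · exact Or.inr ⟨h, h1, h2⟩
  · rintro (⟨⟨_, _⟩, h⟩ | ⟨_, h, h2⟩)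
    · omega
    · exact ⟨h, h2⟩

lemma noc_symm {p r : ℕ × ℕ} (h : ∀ v, Tch v p → ¬ Tch v r) : ∀ v, Tch v r → ¬ Tch v p :=
  fun v hr hp => h v hp hr

/-- the shifted image of a pair -/
def shf (x y : ℕ) (p : ℕ × ℕ) : ℕ × ℕ :=
  if p.2 = y then (min x p.1, max x p.1) else (x, p.2)

def mv (x y : ℕ) (E : Finset (ℕ × ℕ)) (p : ℕ × ℕ) : Prop :=
  (p.1 = y ∨ p.2 = y) ∧ p.1 ≠ x ∧ p.2 ≠ x ∧ shf x y p ∉ E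

instance (x y E p) : Decidable (mv x y E p) := by unfold mv; infer_instance

def sfun (x y : ℕ) (E : Finset (ℕ × ℕ)) (p : ℕ × ℕ) : ℕ × ℕ :=
  if mv x y E p then shf x y p else p

def shift (x y : ℕ) (E : Finset (ℕ × ℕ)) : Finset (ℕ × ℕ) := E.image (sfun x y E)

lemma shf_spec {x y : ℕ} {p : ℕ × ℕ} (hxy : x < y) (hs : p.1 < p.2)
    (h1 : p.1 = y ∨ p.2 = y) (h2 : p.1 ≠ x) (h3 : p.2 ≠ x) :
    ∃ w, w ≠ x ∧ w ≠ y ∧ (p = (w, y) ∨ p = (y, w)) ∧ shf x y p = (min x w, max x w) := by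
  rcases h1 with h | h
  · refine ⟨p.2, h3, by omega, Or.inr (by rw [← h]), ?_⟩
    have hne : p.2 ≠ y := by omega
    simp only [shf, if_neg hne]
    have : min x p.2 = x := by omega
    have h2 : max x p.2 = p.2 := by omega
    rw [this, h2]
  · refine ⟨p.1, h2, by omega, Or.inl (by rw [← h]), ?_⟩
    simp only [shf, if_pos h]

lemma sfun_injOn {x y : ℕ} {E : Finset (ℕ × ℕ)} (hxy : x < y)
    (hE : ∀ p ∈ E, p.1 < p.2) : Set.InjOn (sfun x y E) E := by
  intro p hp r hr hpr
  by_cases h1 : mv x y E p <;> by_cases h2 : mv x y E r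
  · obtain ⟨w1, hw1x, hw1y, hp1, hsh1⟩ := shf_spec hxy (hE p hp) h1.1 h1.2.1 h1.2.2.1
    obtain ⟨w2, hw2x, hw2y, hp2, hsh2⟩ := shf_spec hxy (hE r hr) h2.1 h2.2.1 h2.2.2.1
    simp only [sfun, if_pos h1, if_pos h2, hsh1, hsh2, Prod.mk.injEq] at hpr
    have hw : w1 = w2 := by omega
    have hsp := hE p hp; have hsr := hE r hr
    rcases hp1 with h | h <;> rcases hp2 with h' | h' <;>
      (rw [h] at hsp ⊢; rw [h'] at hsr ⊢; simp at hsp hsr ⊢) <;> omega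
  · exfalso
    simp only [sfun, if_pos h1, if_neg h2] at hpr
    exact h1.2.2.2 (hpr ▸ hr)
  · exfalso
    simp only [sfun, if_pos h2, if_neg h1] at hpr
    exact h2.2.2.2 (hpr ▸ hp)
  · simpa only [sfun, if_neg h1, if_neg h2] using hpr

lemma shift_card {x y : ℕ} {E : Finset (ℕ × ℕ)} (hxy : x < y)
    (hE : ∀ p ∈ E, p.1 < p.2) : (shift x y E).card = E.card :=
  card_image_of_injOn (sfun_injOn hxy hE)

lemma shift_bounds {x y q : ℕ} {E : Finset (ℕ × ℕ)} (hxy : x < y)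
    (hE : ∀ p ∈ E, p.1 < p.2 ∧ p.2 < q) :
    ∀ p ∈ shift x y E, p.1 < p.2 ∧ p.2 < q := by
  intro p hp
  obtain ⟨r, hr, rfl⟩ := mem_image.mp hp
  by_cases h : mv x y E r
  · obtain ⟨w, hwx, hwy, hcase, hsh⟩ := shf_spec hxy (hE r hr).1 h.1 h.2.1 h.2.2.1
    have hb := hE r hr
    have hwq : w < q := by rcases hcase with h' | h' <;> (rw [h'] at hb; simp at hb) <;> omega
    have hxq : x < q := by
      rcases hcase with h' | h' <;> rw [h'] at hb <;> simp at hb <;> omega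
    simp only [sfun, if_pos h, hsh]
    constructor <;> simp <;> omega
  · simp only [sfun, if_neg h]; exact hE r hr


lemma shift_pullback {x y : ℕ} {E : Finset (ℕ × ℕ)} (hxy : x < y)
    (hE : ∀ p ∈ E, p.1 < p.2) {A : Finset (ℕ × ℕ)} (hA : A ⊆ shift x y E) (hD : Disj A) :
    ∃ B, B ⊆ E ∧ Disj B ∧ B.card = A.card := by
  by_cases hgood : ∀ p ∈ A, p ∈ E
  · exact ⟨A, fun p hp => hgood p hp, hD, rfl⟩
  push_neg at hgood
  obtain ⟨e', he'A, he'E⟩ := hgood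
  obtain ⟨p₀, hp₀E, hsf⟩ := mem_image.mp (hA he'A)
  have hmv : mv x y E p₀ := by
    by_contra h
    rw [sfun, if_neg h] at hsf
    exact he'E (hsf ▸ hp₀E)
  rw [sfun, if_pos hmv] at hsf
  obtain ⟨w₀, hwx, hwy, hp₀, hshf⟩ := shf_spec hxy (hE p₀ hp₀E) hmv.1 hmv.2.1 hmv.2.2.1
  rw [hshf] at hsf
  have hTxe' : Tch x e' := by rw [← hsf]; unfold Tch; simp; omega
  have hTwe' : Tch w₀ e' := by rw [← hsf]; unfold Tch; simp; omega
  have hTye' : ¬ Tch y e' := by rw [← hsf]; unfold Tch; simp; omega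
  have hTyp₀ : Tch y p₀ := by unfold Tch; rcases hp₀ with h | h <;> rw [h] <;> simp
  have hTp₀ : ∀ v, Tch v p₀ → v = y ∨ v = w₀ := by
    intro v hv
    rcases hp₀ with h | h <;> rw [h] at hv <;> unfold Tch at hv <;> simp at hv <;> tauto
  have huniq : ∀ r ∈ A, r ≠ e' → r ∈ E := by
    intro r hrA hre
    by_contra hrE
    obtain ⟨p₁, hp₁E, hsf₁⟩ := mem_image.mp (hA hrA)
    have hmv₁ : mv x y E p₁ := by
      by_contra h; rw [sfun, if_neg h] at hsf₁; exact hrE (hsf₁ ▸ hp₁E)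
    rw [sfun, if_pos hmv₁] at hsf₁
    obtain ⟨w₁, hw₁x, _, _, hshf₁⟩ := shf_spec hxy (hE p₁ hp₁E) hmv₁.1 hmv₁.2.1 hmv₁.2.2.1
    rw [hshf₁] at hsf₁
    have : Tch x r := by rw [← hsf₁]; unfold Tch; simp; omega
    exact hD r hrA e' he'A hre x this hTxe'
  by_cases hy : ∃ ey ∈ A, Tch y ey
  · obtain ⟨ey, heyA, hTyey⟩ := hy
    have heye' : ey ≠ e' := fun h => hTye' (h ▸ hTyey)
    have heyE : ey ∈ E := huniq ey heyA heye'
    have hsey := hE ey heyE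
    have hz : ∃ z, z ≠ y ∧ (ey = (z, y) ∨ ey = (y, z)) := by
      rcases hTyey with h | h
      · exact ⟨ey.2, by omega, Or.inr (by rw [← h])⟩
      · exact ⟨ey.1, by omega, Or.inl (by rw [← h])⟩
    obtain ⟨z, hzy, hey⟩ := hz
    have hTzey : Tch z ey := by
      unfold Tch; rcases hey with h | h <;> rw [h] <;> simp
    have hTey : ∀ v, Tch v ey → v = y ∨ v = z := by
      intro v hv
      rcases hey with h | h <;> rw [h] at hv <;> unfold Tch at hv <;> simp at hv <;> tauto
    have hzx : z ≠ x := by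
      intro h
      exact hD ey heyA e' he'A heye' x (h ▸ hTzey) hTxe'
    have hzw : z ≠ w₀ := by
      intro h
      exact hD e' he'A ey heyA (Ne.symm heye') w₀ hTwe' (h ▸ hTzey)
    have hxy1 : ey.1 ≠ x ∧ ey.2 ≠ x := by
      rcases hey with h | h <;> rw [h] <;> constructor <;> simp <;> omega
    have hshfey : shf x y ey = (min x z, max x z) := by
      rcases hey with h | h
      · rw [h]; simp only [shf]; simp
      · rw [h]; simp only [shf, if_neg (show z ≠ y from hzy)]
        have h1 : min x z = x := by
          have : y < z := by rw [h] at hsey; simpa using hsey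
          omega
        have h2 : max x z = z := by
          have : y < z := by rw [h] at hsey; simpa using hsey
          omega
        rw [h1, h2]
    have hsfey : sfun x y E ey = ey := by
      obtain ⟨p₂, hp₂E, hsf₂⟩ := mem_image.mp (hA heyA)
      by_cases h : mv x y E p₂
      · exfalso
        rw [sfun, if_pos h] at hsf₂
        obtain ⟨w₂, _, _, _, hshf₂⟩ := shf_spec hxy (hE p₂ hp₂E) h.1 h.2.1 h.2.2.1
        rw [hshf₂] at hsf₂
        have : Tch x ey := by rw [← hsf₂]; unfold Tch; simp; omega
        exact hD ey heyA e' he'A heye' x this hTxe'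
      · rw [sfun, if_neg h] at hsf₂; rw [← hsf₂]
        rw [sfun, if_neg (hsf₂ ▸ h)]
    have hszE : (min x z, max x z) ∈ E := by
      by_cases h : mv x y E ey
      · exfalso
        rw [sfun, if_pos h, hshfey] at hsfey
        have : Tch y (min x z, max x z) := hsfey ▸ hTyey
        unfold Tch at this; simp at this; omega
      · unfold mv at h
        push_neg at h
        rw [← hshfey]
        exact h hTyey hxy1.1 hxy1.2
    -- the new matching
    set szx : ℕ × ℕ := (min x z, max x z) with hszx
    have hTszx : ∀ v, Tch v szx → v = x ∨ v = z := by
      intro v hv; unfold Tch at hv; simp [hszx] at hv; omega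
    have hTxszx : Tch x szx := by unfold Tch; simp [hszx]; omega
    have hTzszx : Tch z szx := by unfold Tch; simp [hszx]; omega
    have h2le : 2 ≤ A.card := Finset.one_lt_card.mpr ⟨e', he'A, ey, heyA, Ne.symm heye'⟩
    have heyer : ey ∈ A.erase e' := mem_erase.mpr ⟨heye', heyA⟩
    have hszx_old : szx ∉ (A.erase e').erase ey := by
      intro h
      have hszA : szx ∈ A := mem_of_mem_erase (mem_of_mem_erase h)
      have hne : szx ≠ e' := (mem_erase.mp (mem_of_mem_erase h)).1
      exact hD szx hszA e' he'A hne x hTxszx hTxe'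
    have hp₀_ne_szx : p₀ ≠ szx := by
      intro h
      have := h ▸ hTyp₀
      rcases hTszx y this with h' | h' <;> omega
    have hp₀_old : p₀ ∉ (A.erase e').erase ey := by
      intro h
      have hp₀A : p₀ ∈ A := mem_of_mem_erase (mem_of_mem_erase h)
      have hne : p₀ ≠ ey := (mem_erase.mp h).1
      exact hD p₀ hp₀A ey heyA hne y hTyp₀ hTyey
    refine ⟨insert p₀ (insert szx ((A.erase e').erase ey)), ?_, ?_, ?_⟩
    · intro r hr
      rcases mem_insert.mp hr with rfl | hr
      · exact hp₀E
      rcases mem_insert.mp hr with rfl | hr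
      · exact hszE
      · exact huniq r (mem_of_mem_erase (mem_of_mem_erase hr)) (mem_erase.mp (mem_of_mem_erase hr)).1
    · intro p hp r hr hne v hvp hvr
      have classify : ∀ u ∈ insert p₀ (insert szx ((A.erase e').erase ey)), ∀ v', Tch v' u →
          (u = p₀ ∧ (v' = y ∨ v' = w₀)) ∨ (u = szx ∧ (v' = x ∨ v' = z)) ∨
          (u ∈ A ∧ u ≠ e' ∧ u ≠ ey ∧ Tch v' u) := by
        intro u hu v' hv'
        rcases mem_insert.mp hu with rfl | hu
        · exact Or.inl ⟨rfl, hTp₀ v' hv'⟩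
        rcases mem_insert.mp hu with rfl | hu
        · exact Or.inr (Or.inl ⟨rfl, hTszx v' hv'⟩)
        · exact Or.inr (Or.inr ⟨mem_of_mem_erase (mem_of_mem_erase hu),
            (mem_erase.mp (mem_of_mem_erase hu)).1, (mem_erase.mp hu).1, hv'⟩)
      rcases classify p hp v hvp with ⟨rfl, hvy⟩ | ⟨rfl, hvx⟩ | ⟨hpA, hpe', hpey, hTvp⟩ <;>
        rcases classify r hr v hvr with ⟨rfl, hvy'⟩ | ⟨rfl, hvx'⟩ | ⟨hrA, hre', hrey, hTvr⟩
      · exact hne rfl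
      · rcases hvy with rfl | rfl <;> rcases hvx' with h | h <;> omega
      · rcases hvy with h | h
        · exact hD ey heyA r hrA (Ne.symm hrey) y hTyey (h ▸ hTvr)
        · exact hD e' he'A r hrA (Ne.symm hre') w₀ hTwe' (h ▸ hTvr)
      · rcases hvx with rfl | rfl <;> rcases hvy' with h | h <;> omega
      · exact hne rfl
      · rcases hvx with h | h
        · exact hD e' he'A r hrA (Ne.symm hre') x hTxe' (h ▸ hTvr)
        · exact hD ey heyA r hrA (Ne.symm hrey) z hTzey (h ▸ hTvr)
      · rcases hvy' with h | h
        · exact hD ey heyA p hpA (Ne.symm hpey) y hTyey (h ▸ hTvp)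
        · exact hD e' he'A p hpA (Ne.symm hpe') w₀ hTwe' (h ▸ hTvp)
      · rcases hvx' with h | h
        · exact hD e' he'A p hpA (Ne.symm hpe') x hTxe' (h ▸ hTvp)
        · exact hD ey heyA p hpA (Ne.symm hpey) z hTzey (h ▸ hTvp)
      · exact hD p hpA r hrA hne v hTvp hTvr
    · rw [card_insert_of_notMem (by
        intro h
        rcases mem_insert.mp h with h | h
        · exact hp₀_ne_szx h
        · exact hp₀_old h), card_insert_of_notMem hszx_old,
        card_erase_of_mem heyer, card_erase_of_mem he'A]
      omega
  · push_neg at hy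
    have hp₀A : p₀ ∉ A.erase e' := by
      intro h
      exact hy p₀ (mem_of_mem_erase h) hTyp₀
    refine ⟨insert p₀ (A.erase e'), ?_, ?_, ?_⟩
    · intro r hr
      rcases mem_insert.mp hr with rfl | hr
      · exact hp₀E
      · exact huniq r (mem_of_mem_erase hr) (mem_erase.mp hr).1
    · intro p hp r hr hne v hvp hvr
      have classify : ∀ u ∈ insert p₀ (A.erase e'), ∀ v', Tch v' u →
          (u = p₀ ∧ (v' = y ∨ v' = w₀)) ∨ (u ∈ A ∧ u ≠ e' ∧ Tch v' u) := by
        intro u hu v' hv'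
        rcases mem_insert.mp hu with rfl | hu
        · exact Or.inl ⟨rfl, hTp₀ v' hv'⟩
        · exact Or.inr ⟨mem_of_mem_erase hu, (mem_erase.mp hu).1, hv'⟩
      rcases classify p hp v hvp with ⟨rfl, hvy⟩ | ⟨hpA, hpe', hTvp⟩ <;>
        rcases classify r hr v hvr with ⟨rfl, hvy'⟩ | ⟨hrA, hre', hTvr⟩
      · exact hne rfl
      · rcases hvy with h | h
        · exact hy r hrA (h ▸ hTvr)
        · exact hD e' he'A r hrA (Ne.symm hre') w₀ hTwe' (h ▸ hTvr)
      · rcases hvy' with h | h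
        · exact hy p hpA (h ▸ hTvp)
        · exact hD e' he'A p hpA (Ne.symm hpe') w₀ hTwe' (h ▸ hTvp)
      · exact hD p hpA r hrA hne v hTvp hTvr
    · rw [card_insert_of_notMem hp₀A, card_erase_of_mem he'A]
      have : 1 ≤ A.card := card_pos.mpr ⟨e', he'A⟩
      omega


def Pot (E : Finset (ℕ × ℕ)) : ℕ := ∑ p ∈ E, (p.1 + p.2)

lemma shift_pot {x y : ℕ} {E : Finset (ℕ × ℕ)} (hxy : x < y) (hE : ∀ p ∈ E, p.1 < p.2) :
    shift x y E = E ∨ Pot (shift x y E) < Pot E := by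
  by_cases h : ∀ p ∈ E, ¬ mv x y E p
  · left
    have : ∀ p ∈ E, sfun x y E p = p := by
      intro p hp; rw [sfun, if_neg (h p hp)]
    rw [shift, Finset.image_congr (fun p hp => this p hp), Finset.image_id']
  · right
    push_neg at h
    obtain ⟨p₀, hp₀, hmv₀⟩ := h
    have hsum : Pot (shift x y E) = ∑ p ∈ E, ((sfun x y E p).1 + (sfun x y E p).2) := by
      rw [Pot, shift, Finset.sum_image (fun p hp r hr h => sfun_injOn hxy (fun p hp => hE p hp) hp hr h)]
    rw [hsum]
    apply Finset.sum_lt_sum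
    · intro p hp
      by_cases h : mv x y E p
      · obtain ⟨w, hwx, hwy, hcase, hsh⟩ := shf_spec hxy (hE p hp) h.1 h.2.1 h.2.2.1
        rw [sfun, if_pos h, hsh]
        have : min x w + max x w = x + w := min_add_max x w
        rcases hcase with h' | h' <;> rw [h'] <;> simp <;> omega
      · rw [sfun, if_neg h]
    · refine ⟨p₀, hp₀, ?_⟩
      obtain ⟨w, hwx, hwy, hcase, hsh⟩ := shf_spec hxy (hE p₀ hp₀) hmv₀.1 hmv₀.2.1 hmv₀.2.2.1
      rw [sfun, if_pos hmv₀, hsh]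
      have : min x w + max x w = x + w := min_add_max x w
      rcases hcase with h' | h' <;> rw [h'] <;> simp <;> omega

def IsShifted (E : Finset (ℕ × ℕ)) : Prop :=
  ∀ p ∈ E, ∀ i j : ℕ, i ≤ p.1 → j ≤ p.2 → i < j → (i, j) ∈ E

lemma find_shift {E : Finset (ℕ × ℕ)} (hE : ∀ p ∈ E, p.1 < p.2) (h : ¬ IsShifted E) :
    ∃ x y, x < y ∧ shift x y E ≠ E := by
  unfold IsShifted at h
  push_neg at h
  obtain ⟨p₀, hp₀, i, j, hi, hj, hij, hnij⟩ := h
  by_cases hr : (i, p₀.2) ∈ E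
  · have hjlt : j < p₀.2 := by
      rcases Nat.lt_or_ge j p₀.2 with h | h
      · exact h
      · exfalso; have : j = p₀.2 := le_antisymm hj h
        exact hnij (this ▸ hr)
    refine ⟨j, p₀.2, hjlt, ?_⟩
    have hmvr : mv j p₀.2 E (i, p₀.2) := by
      refine ⟨Or.inr rfl, by simp; omega, by simp; omega, ?_⟩
      have : shf j p₀.2 (i, p₀.2) = (i, j) := by
        simp only [shf, if_pos rfl]
        have h1 : min j i = i := by omega
        have h2 : max j i = j := by omega
        simp only [h1, h2]; simp
      rw [this]; exact hnij
    intro heq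
    have : sfun j p₀.2 E (i, p₀.2) ∈ shift j p₀.2 E := mem_image_of_mem _ hr
    rw [heq, sfun, if_pos hmvr] at this
    have hsh : shf j p₀.2 (i, p₀.2) = (i, j) := by
      simp only [shf, if_pos rfl]
      have h1 : min j i = i := by omega
      have h2 : max j i = j := by omega
      simp only [h1, h2]; simp
    rw [hsh] at this
    exact hnij this
  · have hilt : i < p₀.1 := by
      rcases Nat.lt_or_ge i p₀.1 with h | h
      · exact h
      · exfalso
        have : i = p₀.1 := le_antisymm hi h
        apply hr
        have : (i, p₀.2) = p₀ := by rw [this]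
        rw [this]; exact hp₀
    refine ⟨i, p₀.1, hilt, ?_⟩
    have hs := hE p₀ hp₀
    have hmvp : mv i p₀.1 E p₀ := by
      refine ⟨Or.inl rfl, by omega, by omega, ?_⟩
      have : shf i p₀.1 p₀ = (i, p₀.2) := by
        simp only [shf, if_neg (show p₀.2 ≠ p₀.1 by omega)]
      rw [this]; exact hr
    intro heq
    have hmem : sfun i p₀.1 E p₀ ∈ shift i p₀.1 E := mem_image_of_mem _ hp₀
    rw [heq, sfun, if_pos hmvp] at hmem
    have hsh : shf i p₀.1 p₀ = (i, p₀.2) := by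
      simp only [shf, if_neg (show p₀.2 ≠ p₀.1 by omega)]
    rw [hsh] at hmem
    exact hr hmem

lemma EG_shifted {E : Finset (ℕ × ℕ)} {q s : ℕ} (hsh : IsShifted E)
    (hE : ∀ p ∈ E, p.1 < p.2 ∧ p.2 < q)
    (hmatch : ∀ A ⊆ E, Disj A → A.card ≤ s) :
    ∃ l, l ≤ s ∧ E.card + (q - l).choose 2 ≤ q.choose 2 + (2 * (s - l) + 1).choose 2 := by
  have hfind : ∃ l, l ≤ s ∧ (l, 2 * s + 1 - l) ∉ E := by
    by_contra h
    push_neg at h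
    set A : Finset (ℕ × ℕ) := (range (s + 1)).image (fun l => (l, 2 * s + 1 - l)) with hA
    have hAE : A ⊆ E := by
      intro p hp
      obtain ⟨l, hl, rfl⟩ := mem_image.mp hp
      exact h l (by simpa using Nat.lt_succ_iff.mp (mem_range.mp hl))
    have hDA : Disj A := by
      intro p hp r hr hne v hvp hvr
      obtain ⟨l, hl, rfl⟩ := mem_image.mp hp
      obtain ⟨l', hl', rfl⟩ := mem_image.mp hr
      rw [mem_range] at hl hl'
      unfold Tch at hvp hvr
      simp only at hvp hvr
      have : l ≠ l' := fun he => hne (by rw [he])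
      omega
    have hcard : A.card = s + 1 := by
      rw [hA, card_image_of_injOn, card_range]
      intro a ha b hb hab
      simpa using congrArg Prod.fst hab
    have := hmatch A hAE hDA
    omega
  obtain ⟨l, hl, hlE⟩ := hfind
  refine ⟨l, hl, ?_⟩
  have hsubset : E ⊆ ((range l ×ˢ range q).filter fun p => p.1 < p.2) ∪ icoPairs l (2 * s + 1 - l) := by
    intro p hp
    obtain ⟨hps, hpq⟩ := hE p hp
    rcases Nat.lt_or_ge p.1 l with h | h
    · apply mem_union_left
      simp only [mem_filter, mem_product, mem_range]
      exact ⟨⟨h, hpq⟩, hps⟩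
    · apply mem_union_right
      rw [mem_icoPairs]
      refine ⟨h, hps, ?_⟩
      by_contra hge
      push_neg at hge
      exact hlE (hsh p hp l (2 * s + 1 - l) h hge (by omega))
  have hicocard : (icoPairs l (2 * s + 1 - l)).card = (2 * (s - l) + 1).choose 2 := by
    rw [card_icoPairs]
    congr 1
    omega
  have hc1 : E.card ≤ ((range l ×ˢ range q).filter fun p => p.1 < p.2).card
      + (2 * (s - l) + 1).choose 2 := by
    calc E.card ≤ (((range l ×ˢ range q).filter fun p => p.1 < p.2) ∪ icoPairs l (2 * s + 1 - l)).card :=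
          card_le_card hsubset
    _ ≤ _ := by rw [← hicocard]; exact card_union_le _ _
  have hsplit := allPairs_split q l
  have hap := card_allPairs q
  omega


lemma EG_aux (N : ℕ) : ∀ (E : Finset (ℕ × ℕ)) (q s : ℕ), Pot E ≤ N →
    (∀ p ∈ E, p.1 < p.2 ∧ p.2 < q) → (∀ A ⊆ E, Disj A → A.card ≤ s) →
    ∃ l, l ≤ s ∧ E.card + (q - l).choose 2 ≤ q.choose 2 + (2 * (s - l) + 1).choose 2 := by
  induction N with
  | zero =>
      intro E q s hP hE hmatch
      by_cases hsh : IsShifted E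
      · exact EG_shifted hsh hE hmatch
      · obtain ⟨x, y, hxy, hne⟩ := find_shift (fun p hp => (hE p hp).1) hsh
        rcases shift_pot hxy (fun p hp => (hE p hp).1) with h | h
        · exact absurd h hne
        · omega
  | succ n ih =>
      intro E q s hP hE hmatch
      by_cases hsh : IsShifted E
      · exact EG_shifted hsh hE hmatch
      · obtain ⟨x, y, hxy, hne⟩ := find_shift (fun p hp => (hE p hp).1) hsh
        rcases shift_pot hxy (fun p hp => (hE p hp).1) with h | h
        · exact absurd h hne
        · have hE' := shift_bounds hxy hE
          have hmatch' : ∀ A ⊆ shift x y E, Disj A → A.card ≤ s := by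
            intro A hA hD
            obtain ⟨B, hBsub, hBD, hBcard⟩ :=
              shift_pullback hxy (fun p hp => (hE p hp).1) hA hD
            rw [← hBcard]
            exact hmatch B hBsub hBD
          have hcard : (shift x y E).card = E.card :=
            shift_card hxy (fun p hp => (hE p hp).1)
          have := ih (shift x y E) q s (by omega) hE' hmatch'
          rwa [hcard] at this

/-- Erdős–Gallai-type bound (via compressions): if a graph given as a
finset of sorted pairs on `{0,…,q-1}` has no matching of size `s+1`, then
`e ≤ C(q,2) - C(q-l,2) + C(2(s-l)+1, 2)` for some `l ≤ s`. -/
theorem EG_core {E : Finset (ℕ × ℕ)} {q s : ℕ}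
    (hE : ∀ p ∈ E, p.1 < p.2 ∧ p.2 < q)
    (hmatch : ∀ A ⊆ E, Disj A → A.card ≤ s) :
    ∃ l, l ≤ s ∧ E.card + (q - l).choose 2 ≤ q.choose 2 + (2 * (s - l) + 1).choose 2 :=
  EG_aux (Pot E) E q s (le_refl _) hE hmatch




lemma numeric_contra {k s l e : ℕ} {a c : ℝ}
    (ha0 : 0 ≤ a) (ha1 : a ≤ 1) (hc0 : 0 ≤ c) (hc1 : c ≤ 1)
    (hac : a ^ 2 + c ^ 2 = 1)
    (hs1 : (s : ℝ) + 1 ≤ a * k / 2)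
    (hs2 : (s : ℝ) + 1 ≤ (1 - c) * k)
    (hls : l ≤ s)
    (he : a ^ 2 * ((k : ℝ) * ((k : ℝ) - 1)) / 2 ≤ (e : ℝ))
    (hcount : e + (k - l).choose 2 ≤ k.choose 2 + (2 * (s - l) + 1).choose 2) : False := by
  have hK0 : (0:ℝ) ≤ (k:ℝ) := Nat.cast_nonneg k
  have hS0 : (0:ℝ) ≤ (s:ℝ) := Nat.cast_nonneg s
  have hL0 : (0:ℝ) ≤ (l:ℝ) := Nat.cast_nonneg l
  have hLS : (l:ℝ) ≤ (s:ℝ) := Nat.cast_le.mpr hls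
  have haK : (2:ℝ) ≤ a * k := by nlinarith
  have hKa : a * (k:ℝ) ≤ (k:ℝ) := by nlinarith
  have hK2 : (2:ℝ) ≤ (k:ℝ) := by nlinarith
  have hSK : (s:ℝ) + 1 ≤ (k:ℝ) / 2 := by nlinarith
  have hlk : l ≤ k := by
    have h : (l:ℝ) ≤ (k:ℝ) := by nlinarith
    exact_mod_cast h
  -- cast the count bound
  have hcR : (e : ℝ) + ((k:ℝ) - l) * ((k:ℝ) - l - 1) / 2 ≤
      (k:ℝ) * ((k:ℝ) - 1) / 2 + (2 * ((s:ℝ) - l) + 1) * (2 * ((s:ℝ) - l)) / 2 := by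
    have hcast : (e : ℝ) + ((k - l).choose 2 : ℝ) ≤ (k.choose 2 : ℝ) + ((2 * (s - l) + 1).choose 2 : ℝ) := by
      exact_mod_cast hcount
    rw [Nat.cast_choose_two, Nat.cast_choose_two, Nat.cast_choose_two] at hcast
    rw [Nat.cast_sub hlk] at hcast
    have h2 : ((2 * (s - l) + 1 : ℕ) : ℝ) = 2 * ((s:ℝ) - l) + 1 := by
      push_cast [Nat.cast_sub hls]; ring
    rw [h2] at hcast
    calc (e : ℝ) + ((k:ℝ) - l) * ((k:ℝ) - l - 1) / 2 ≤
        (k:ℝ) * ((k:ℝ) - 1) / 2 + (2 * ((s:ℝ) - l) + 1) * (2 * ((s:ℝ) - l) + 1 - 1) / 2 := hcast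
      _ = (k:ℝ) * ((k:ℝ) - 1) / 2 + (2 * ((s:ℝ) - l) + 1) * (2 * ((s:ℝ) - l)) / 2 := by ring
  set EL : ℝ := a ^ 2 * ((k:ℝ) * ((k:ℝ) - 1)) / 2 with hEL
  set g0 : ℝ := (s:ℝ) * (2 * (s:ℝ) + 1) with hg0
  set gs : ℝ := (s:ℝ) * (2 * (k:ℝ) - (s:ℝ) - 1) / 2 with hgs
  set gl : ℝ := (k:ℝ) * ((k:ℝ) - 1) / 2 - ((k:ℝ) - l) * ((k:ℝ) - l - 1) / 2
      + (2 * ((s:ℝ) - l) + 1) * (2 * ((s:ℝ) - l)) / 2 with hgl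
  have hEleGL : (e : ℝ) ≤ gl := by rw [hgl]; linarith
  have hELe : EL ≤ (e : ℝ) := he
  have hg0lt : g0 < EL := by
    have h1 : (s:ℝ) ≤ a * k / 2 - 1 := by linarith
    have h2 : (2 * (s:ℝ) + 1) ≤ a * k - 1 := by linarith
    have t1 : (s:ℝ) * (2 * (s:ℝ) + 1) ≤ (a * k / 2 - 1) * (a * k - 1) := by
      nlinarith [mul_nonneg (show (0:ℝ) ≤ a * k / 2 - 1 - s by linarith)
          (show (0:ℝ) ≤ a * k - 1 by linarith),
        mul_nonneg hS0 (show (0:ℝ) ≤ a * k - 1 - (2 * s + 1) by linarith)]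
    have haaK : a * (a * k) ≤ 1 * (a * k) :=
      mul_le_mul_of_nonneg_right ha1 (by linarith)
    have t2 : (a * k / 2 - 1) * (a * k - 1) < EL := by
      rw [hEL]; nlinarith
    rw [hg0]; linarith
  have hgslt : gs < EL := by
    rcases eq_or_lt_of_le hc0 with hc | hc
    · have ha : a = 1 := by nlinarith
      rw [hgs, hEL, ha]
      have hSb : (s:ℝ) ≤ (k:ℝ) / 2 - 1 := by rw [ha] at hs1; linarith
      nlinarith [mul_nonneg (show (0:ℝ) ≤ (k:ℝ) / 2 - 1 - s by linarith)
        (show (0:ℝ) ≤ 2 * (k:ℝ) - 1 - s - ((k:ℝ) / 2 - 1) by nlinarith)]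
    · have hSb : (s:ℝ) ≤ (1 - c) * k - 1 := by linarith
      have t1 : (s:ℝ) * (2 * (k:ℝ) - s - 1) ≤ ((1 - c) * k - 1) * (2 * (k:ℝ) - ((1 - c) * k - 1) - 1) := by
        nlinarith [mul_nonneg (show (0:ℝ) ≤ (1 - c) * k - 1 - s by linarith)
          (show (0:ℝ) ≤ 2 * (k:ℝ) - 1 - s - ((1 - c) * k - 1) by nlinarith)]
      have t2 : ((1 - c) * k - 1) * (2 * (k:ℝ) - ((1 - c) * k - 1) - 1) < a ^ 2 * ((k:ℝ) * ((k:ℝ) - 1)) := by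
        have hexp : ((1 - c) * k - 1) * (2 * (k:ℝ) - ((1 - c) * k - 1) - 1)
            = (1 - c ^ 2) * (k:ℝ) ^ 2 - (1 + c) * k := by ring
        have ha2 : a ^ 2 = 1 - c ^ 2 := by linarith
        rw [hexp, ha2]
        have hck : (1 - c ^ 2) * (k:ℝ) ≤ (k:ℝ) := by nlinarith
        nlinarith
      rw [hgs, hEL]
      linarith
  have key : ((s:ℝ) - l) * g0 + (l:ℝ) * gs - (s:ℝ) * gl = 3 / 2 * s * l * ((s:ℝ) - l) := by
    rw [hg0, hgs, hgl]; ring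
  rcases eq_or_lt_of_le hL0 with hL0' | hL0'
  · have hgeq : gl = g0 := by
      rw [hgl, hg0, ← hL0']; ring
    rw [hgeq] at hEleGL
    linarith
  · have c1 : ((s:ℝ) - l) * g0 ≤ ((s:ℝ) - l) * EL :=
      mul_le_mul_of_nonneg_left (le_of_lt hg0lt) (by linarith)
    have c2 : (l:ℝ) * gs < (l:ℝ) * EL := mul_lt_mul_of_pos_left hgslt hL0'
    have c3 : (0:ℝ) ≤ 3 / 2 * s * l * ((s:ℝ) - l) := by
      have : (0:ℝ) ≤ 3 / 2 * (s:ℝ) := by linarith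
      have h4 : (0:ℝ) ≤ 3 / 2 * (s:ℝ) * l := mul_nonneg this hL0
      exact mul_nonneg h4 (by linarith)
    have hSE : (s:ℝ) * (e : ℝ) ≤ (s:ℝ) * gl := mul_le_mul_of_nonneg_left hEleGL hS0
    have hEE : (s:ℝ) * EL ≤ (s:ℝ) * (e : ℝ) := mul_le_mul_of_nonneg_left hELe hS0
    nlinarith



variable {V : Type} [Fintype V] (G : SimpleGraph V)

noncomputable def vert (v₀ : V) (S : Finset V) (i : ℕ) : V :=
  if h : i < S.card then (S.equivFin.symm ⟨i, h⟩ : V) else v₀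

lemma vert_mem {v₀ : V} {S : Finset V} {i : ℕ} (h : i < S.card) : vert v₀ S i ∈ S := by
  rw [vert, dif_pos h]
  exact (S.equivFin.symm ⟨i, h⟩).2

lemma vert_inj {v₀ : V} {S : Finset V} {i j : ℕ} (hi : i < S.card) (hj : j < S.card)
    (h : vert v₀ S i = vert v₀ S j) : i = j := by
  unfold vert at h
  rw [dif_pos hi, dif_pos hj] at h
  have := S.equivFin.symm.injective (Subtype.ext h)
  simpa using congrArg Fin.val this

lemma vert_surj {v₀ : V} {S : Finset V} {v : V} (h : v ∈ S) :
    ∃ i, i < S.card ∧ vert v₀ S i = v := by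
  refine ⟨(S.equivFin ⟨v, h⟩ : Fin S.card), (S.equivFin ⟨v, h⟩).2, ?_⟩
  rw [vert, dif_pos (S.equivFin ⟨v, h⟩).2]
  have h2 : (⟨(S.equivFin ⟨v, h⟩ : Fin S.card), (S.equivFin ⟨v, h⟩).2⟩ : Fin S.card)
      = S.equivFin ⟨v, h⟩ := rfl
  rw [h2, Equiv.symm_apply_apply]

noncomputable def Efin (v₀ : V) (S : Finset V) : Finset (ℕ × ℕ) :=
  @Finset.filter _ (fun p => p.1 < p.2 ∧ G.Adj (vert v₀ S p.1) (vert v₀ S p.2))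
    (fun _ => Classical.propDecidable _) (range S.card ×ˢ range S.card)

lemma mem_Efin {v₀ : V} {S : Finset V} {p : ℕ × ℕ} :
    p ∈ Efin G v₀ S ↔ p.1 < p.2 ∧ p.2 < S.card ∧ G.Adj (vert v₀ S p.1) (vert v₀ S p.2) := by
  simp only [Efin, Finset.mem_filter, Finset.mem_product, Finset.mem_range]
  constructor
  · rintro ⟨⟨_, h2⟩, h3, h4⟩; exact ⟨h3, h2, h4⟩
  · rintro ⟨h3, h2, h4⟩; exact ⟨⟨lt_trans h3 h2, h2⟩, h3, h4⟩

lemma Efin_card (v₀ : V) (S : Finset V) :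
    (G.induce (S : Set V)).edgeSet.ncard = (Efin G v₀ S).card := by
  classical
  have hfin : (G.induce (S : Set V)).edgeSet.Finite := Set.toFinite _
  rw [Set.ncard_eq_toFinset_card _ hfin]
  symm
  apply Finset.card_bij (fun (p : ℕ × ℕ) (hp : p ∈ Efin G v₀ S) =>
    (s(⟨vert v₀ S p.1, Finset.mem_coe.mpr (vert_mem (lt_trans ((mem_Efin G).mp hp).1 ((mem_Efin G).mp hp).2.1))⟩,
       ⟨vert v₀ S p.2, Finset.mem_coe.mpr (vert_mem ((mem_Efin G).mp hp).2.1)⟩) : Sym2 (S : Set V)))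
  · intro p hp
    rw [Set.Finite.mem_toFinset, SimpleGraph.mem_edgeSet]
    exact ((mem_Efin G).mp hp).2.2
  · intro p hp q hq heq
    obtain ⟨hp1, hp2, _⟩ := (mem_Efin G).mp hp
    obtain ⟨hq1, hq2, _⟩ := (mem_Efin G).mp hq
    rw [Sym2.eq_iff] at heq
    rcases heq with ⟨h1, h2⟩ | ⟨h1, h2⟩
    · have e1 := vert_inj (v₀ := v₀) (lt_trans hp1 hp2) (lt_trans hq1 hq2)
        (congrArg Subtype.val h1)
      have e2 := vert_inj (v₀ := v₀) hp2 hq2 (congrArg Subtype.val h2)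
      exact Prod.ext e1 e2
    · have e1 := vert_inj (v₀ := v₀) (lt_trans hp1 hp2) hq2 (congrArg Subtype.val h1)
      have e2 := vert_inj (v₀ := v₀) hp2 (lt_trans hq1 hq2) (congrArg Subtype.val h2)
      exfalso; omega
  · intro b hb
    rw [Set.Finite.mem_toFinset] at hb
    induction b using Sym2.inductionOn with
    | hf u w =>
      rw [SimpleGraph.mem_edgeSet] at hb
      have hadj : G.Adj u.1 w.1 := hb
      obtain ⟨i, hi, hvi⟩ := vert_surj (v₀ := v₀) (Finset.mem_coe.mp u.2)
      obtain ⟨j, hj, hvj⟩ := vert_surj (v₀ := v₀) (Finset.mem_coe.mp w.2)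
      have hne : i ≠ j := by
        intro h
        apply G.ne_of_adj hadj
        rw [← hvi, ← hvj, h]
      rcases Nat.lt_or_ge i j with hij | hij
      · refine ⟨(i, j), (mem_Efin G).mpr ⟨hij, hj, ?_⟩, ?_⟩
        · simpa only [hvi, hvj] using hadj
        · rw [Sym2.eq_iff]
          exact Or.inl ⟨Subtype.ext hvi, Subtype.ext hvj⟩
      · have hji : j < i := by omega
        refine ⟨(j, i), (mem_Efin G).mpr ⟨hji, hi, ?_⟩, ?_⟩
        · rw [hvi, hvj]; exact hadj.symm
        · rw [Sym2.eq_iff]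
          exact Or.inr ⟨Subtype.ext hvj, Subtype.ext hvi⟩


/-- a matching of `G` inside `S` -/
def GoodM (G : SimpleGraph V) (S : Finset V) (A : Finset (Sym2 V)) : Prop :=
  (∀ e ∈ A, e ∈ G.edgeSet) ∧ (∀ e ∈ A, ∀ v, v ∈ e → v ∈ S) ∧
  (∀ e ∈ A, ∀ e' ∈ A, e ≠ e' → ∀ v, v ∈ e → v ∉ e')

lemma pairs_to_good (G : SimpleGraph V) (v₀ : V) (S : Finset V) {B : Finset (ℕ × ℕ)}
    (hB : B ⊆ Efin G v₀ S) (hD : Disj B) :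
    ∃ A : Finset (Sym2 V), GoodM G S A ∧ A.card = B.card := by
  classical
  refine ⟨B.image (fun p => s(vert v₀ S p.1, vert v₀ S p.2)), ⟨?_, ?_, ?_⟩, ?_⟩
  · intro e he
    obtain ⟨p, hp, rfl⟩ := Finset.mem_image.mp he
    rw [SimpleGraph.mem_edgeSet]
    exact ((mem_Efin G).mp (hB hp)).2.2
  · intro e he v hv
    obtain ⟨p, hp, rfl⟩ := Finset.mem_image.mp he
    obtain ⟨h1, h2, _⟩ := (mem_Efin G).mp (hB hp)
    rw [Sym2.mem_iff] at hv
    rcases hv with rfl | rfl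
    · exact vert_mem (lt_trans h1 h2)
    · exact vert_mem h2
  · intro e he e' he' hne v hv hv'
    obtain ⟨p, hp, rfl⟩ := Finset.mem_image.mp he
    obtain ⟨q, hq, rfl⟩ := Finset.mem_image.mp he'
    obtain ⟨h1, h2, _⟩ := (mem_Efin G).mp (hB hp)
    obtain ⟨g1, g2, _⟩ := (mem_Efin G).mp (hB hq)
    have hpq : p ≠ q := fun h => hne (by rw [h])
    rw [Sym2.mem_iff] at hv hv'
    have : ∃ i, Tch i p ∧ Tch i q := by
      rcases hv with rfl | rfl <;> rcases hv' with h' | h'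
      · exact ⟨p.1, Or.inl rfl, Or.inl (vert_inj (lt_trans g1 g2) (lt_trans h1 h2) h'.symm)⟩
      · exact ⟨p.1, Or.inl rfl, Or.inr (vert_inj g2 (lt_trans h1 h2) h'.symm)⟩
      · exact ⟨p.2, Or.inr rfl, Or.inl (vert_inj (lt_trans g1 g2) h2 h'.symm)⟩
      · exact ⟨p.2, Or.inr rfl, Or.inr (vert_inj g2 h2 h'.symm)⟩
    obtain ⟨i, hi1, hi2⟩ := this
    exact hD p hp q hq hpq i hi1 hi2
  · rw [Finset.card_image_of_injOn]
    intro p hp q hq heq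
    obtain ⟨h1, h2, _⟩ := (mem_Efin G).mp (hB hp)
    obtain ⟨g1, g2, _⟩ := (mem_Efin G).mp (hB hq)
    rw [Sym2.eq_iff] at heq
    rcases heq with ⟨e1, e2⟩ | ⟨e1, e2⟩
    · exact Prod.ext (vert_inj (lt_trans h1 h2) (lt_trans g1 g2) e1) (vert_inj h2 g2 e2)
    · have := vert_inj (lt_trans h1 h2) g2 e1
      have := vert_inj h2 (lt_trans g1 g2) e2
      exfalso; omega

noncomputable def idx (S : Finset V) (v : V) : ℕ :=
  @dite _ (v ∈ S) (Classical.propDecidable _) (fun h => (S.equivFin ⟨v, h⟩ : ℕ)) (fun _ => 0)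

lemma idx_lt {S : Finset V} {v : V} (h : v ∈ S) : idx S v < S.card := by
  unfold idx; rw [dif_pos h]; exact (S.equivFin ⟨v, h⟩).2

lemma vert_idx {v₀ : V} {S : Finset V} {v : V} (h : v ∈ S) : vert v₀ S (idx S v) = v := by
  unfold idx; rw [dif_pos h]; unfold vert; rw [dif_pos (S.equivFin ⟨v, h⟩).2]
  have h2 : (⟨(S.equivFin ⟨v, h⟩ : ℕ), (S.equivFin ⟨v, h⟩).2⟩ : Fin S.card) = S.equivFin ⟨v, h⟩ := rfl
  rw [h2, Equiv.symm_apply_apply]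

noncomputable def fI (S : Finset V) : Sym2 V → ℕ × ℕ :=
  Sym2.lift ⟨fun a b => (min (idx S a) (idx S b), max (idx S a) (idx S b)), by
    intro a b; simp [min_comm, max_comm]⟩

lemma good_to_pairs (G : SimpleGraph V) (v₀ : V) (S : Finset V) {A : Finset (Sym2 V)}
    (hA : GoodM G S A) :
    ∃ B, B ⊆ Efin G v₀ S ∧ Disj B ∧ B.card = A.card := by
  classical
  obtain ⟨hadj, hmem, hdisj⟩ := hA
  have key : ∀ e ∈ A, ∃ i j, i < j ∧ j < S.card ∧ fI S e = (i, j) ∧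
      vert v₀ S i ∈ e ∧ vert v₀ S j ∈ e ∧ G.Adj (vert v₀ S i) (vert v₀ S j) := by
    intro e he
    induction e using Sym2.inductionOn with
    | hf a b =>
      have hab : G.Adj a b := (SimpleGraph.mem_edgeSet G).mp (hadj _ he)
      have haS : a ∈ S := hmem _ he a (by rw [Sym2.mem_iff]; left; rfl)
      have hbS : b ∈ S := hmem _ he b (by rw [Sym2.mem_iff]; right; rfl)
      have hne : idx S a ≠ idx S b := by
        intro h
        apply G.ne_of_adj hab
        rw [← vert_idx (v₀ := v₀) haS, ← vert_idx (v₀ := v₀) hbS, h]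
      have hfI : fI S s(a, b) = (min (idx S a) (idx S b), max (idx S a) (idx S b)) := rfl
      rcases Nat.lt_or_ge (idx S a) (idx S b) with h | h
      · refine ⟨idx S a, idx S b, h, idx_lt hbS, ?_, ?_, ?_, ?_⟩
        · rw [hfI]; congr 1 <;> omega
        · rw [vert_idx haS]; simp
        · rw [vert_idx hbS]; simp
        · rw [vert_idx haS, vert_idx hbS]; exact hab
      · have h' : idx S b < idx S a := by omega
        refine ⟨idx S b, idx S a, h', idx_lt haS, ?_, ?_, ?_, ?_⟩
        · rw [hfI]; congr 1 <;> omega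
        · rw [vert_idx hbS]; simp
        · rw [vert_idx haS]; simp
        · rw [vert_idx hbS, vert_idx haS]; exact hab.symm
  refine ⟨A.image (fI S), ?_, ?_, ?_⟩
  · intro p hp
    obtain ⟨e, he, rfl⟩ := Finset.mem_image.mp hp
    obtain ⟨i, j, h1, h2, hfe, _, _, hadj'⟩ := key e he
    rw [hfe]
    exact (mem_Efin G).mpr ⟨h1, h2, hadj'⟩
  · intro p hp r hr hne v hv1 hv2
    obtain ⟨e, he, rfl⟩ := Finset.mem_image.mp hp
    obtain ⟨e', he', rfl⟩ := Finset.mem_image.mp hr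
    have hee : e ≠ e' := fun h => hne (by rw [h])
    obtain ⟨i, j, h1, h2, hfe, hvi, hvj, _⟩ := key e he
    obtain ⟨i', j', g1, g2, hfe', hvi', hvj', _⟩ := key e' he'
    rw [hfe] at hv1; rw [hfe'] at hv2
    unfold Tch at hv1 hv2
    simp only at hv1 hv2
    have : ∃ w, w ∈ e ∧ w ∈ e' := by
      rcases hv1 with rfl | rfl <;> rcases hv2 with h' | h'
      · exact ⟨vert v₀ S i, hvi, h' ▸ hvi'⟩
      · exact ⟨vert v₀ S i, hvi, h' ▸ hvj'⟩
      · exact ⟨vert v₀ S j, hvj, h' ▸ hvi'⟩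
      · exact ⟨vert v₀ S j, hvj, h' ▸ hvj'⟩
    obtain ⟨w, hw1, hw2⟩ := this
    exact hdisj e he e' he' hee w hw1 hw2
  · rw [Finset.card_image_of_injOn]
    intro e he e' he' heq
    obtain ⟨i, j, h1, h2, hfe, hvi, hvj, _⟩ := key e he
    obtain ⟨i', j', g1, g2, hfe', hvi', hvj', _⟩ := key e' he'
    by_contra hne
    rw [hfe, hfe'] at heq
    have hii : i = i' ∧ j = j' := by
      constructor <;> [exact congrArg Prod.fst heq; exact congrArg Prod.snd heq]
    obtain ⟨rfl, rfl⟩ := hii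
    exact hdisj e he e' he' hne (vert v₀ S i) hvi hvi'




lemma filter_mem_sym2_card [DecidableEq V] {S : Finset V} : ∀ (e : Sym2 V), ¬ e.IsDiag → (∀ v ∈ e, v ∈ S) →
    (S.filter (fun v => v ∈ e)).card = 2 := by
  classical
  intro e
  induction e using Sym2.inductionOn with
  | hf a b =>
    intro hd hm
    have hab : a ≠ b := fun h => hd (Sym2.mk_isDiag_iff.mpr h)
    have ha : a ∈ S := hm a (by rw [Sym2.mem_iff]; left; rfl)
    have hb : b ∈ S := hm b (by rw [Sym2.mem_iff]; right; rfl)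
    have : S.filter (fun v => v ∈ s(a, b)) = {a, b} := by
      ext v
      simp only [Finset.mem_filter, Sym2.mem_iff, Finset.mem_insert, Finset.mem_singleton]
      constructor
      · rintro ⟨_, h⟩; exact h
      · rintro (rfl | rfl)
        · exact ⟨ha, Or.inl rfl⟩
        · exact ⟨hb, Or.inr rfl⟩
    rw [this, Finset.card_pair hab]

lemma touched_card [DecidableEq V] {S : Finset V} : ∀ (A : Finset (Sym2 V)),
    (∀ e ∈ A, ¬ e.IsDiag) → (∀ e ∈ A, ∀ v, v ∈ e → v ∈ S) →
    (∀ e ∈ A, ∀ e' ∈ A, e ≠ e' → ∀ v, v ∈ e → v ∉ e') →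
    (S.filter (fun v => ∃ e ∈ A, v ∈ e)).card = 2 * A.card := by
  classical
  intro A
  induction A using Finset.induction_on with
  | empty => intro _ _ _; simp
  | @insert e A' hnm ih =>
    intro h1 h2 h3
    have hsplit : S.filter (fun v => ∃ e' ∈ insert e A', v ∈ e') =
        (S.filter (fun v => v ∈ e)) ∪ (S.filter (fun v => ∃ e' ∈ A', v ∈ e')) := by
      ext v
      simp only [Finset.mem_filter, Finset.mem_union, Finset.mem_insert]
      constructor
      · rintro ⟨hv, e', (rfl | he'), hmem⟩
        · exact Or.inl ⟨hv, hmem⟩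
        · exact Or.inr ⟨hv, e', he', hmem⟩
      · rintro (⟨hv, hmem⟩ | ⟨hv, e', he', hmem⟩)
        · exact ⟨hv, e, Or.inl rfl, hmem⟩
        · exact ⟨hv, e', Or.inr he', hmem⟩
    have hdisj : Disjoint (S.filter (fun v => v ∈ e)) (S.filter (fun v => ∃ e' ∈ A', v ∈ e')) := by
      rw [Finset.disjoint_left]
      rintro v hv1 hv2
      obtain ⟨_, hve⟩ := Finset.mem_filter.mp hv1
      obtain ⟨_, e', he', hve'⟩ := Finset.mem_filter.mp hv2
      exact h3 e (Finset.mem_insert_self e A') e' (Finset.mem_insert_of_mem he')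
        (fun h => hnm (h ▸ he')) v hve hve'
    rw [hsplit, Finset.card_union_of_disjoint hdisj,
      filter_mem_sym2_card e (h1 e (Finset.mem_insert_self e A'))
        (fun v hv => h2 e (Finset.mem_insert_self e A') v hv),
      ih (fun e' he' => h1 e' (Finset.mem_insert_of_mem he'))
        (fun e' he' => h2 e' (Finset.mem_insert_of_mem he'))
        (fun e' he' e'' he'' => h3 e' (Finset.mem_insert_of_mem he') e'' (Finset.mem_insert_of_mem he'')),
      Finset.card_insert_of_notMem hnm]
    ring

lemma touched_card' [DecidableEq V] {S : Finset V} (A : Finset (Sym2 V))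
    (h1 : ∀ e ∈ A, ¬ e.IsDiag) (h2 : ∀ e ∈ A, ∀ v, v ∈ e → v ∈ S)
    (h3 : ∀ e ∈ A, ∀ e' ∈ A, e ≠ e' → ∀ v, v ∈ e → v ∉ e')
    (F : Finset V) (hF : ∀ v, v ∈ F ↔ v ∈ S ∧ ∃ e ∈ A, v ∈ e) :
    F.card = 2 * A.card := by
  have hFe : F = S.filter (fun v => ∃ e ∈ A, v ∈ e) := by
    ext v
    rw [hF, Finset.mem_filter]
  rw [hFe]
  exact touched_card A h1 h2 h3

lemma exists_good (G : SimpleGraph V) (S : Finset V) (k M : ℕ) (β μ : ℝ)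
    (hβ0 : 0 ≤ β) (hβ1 : β ≤ 1)
    (hμ : μ = min (Real.sqrt β / 2) (1 - Real.sqrt (1 - β)) * k)
    (hMdef : M = Nat.floor μ)
    (hk : S.card = k)
    (he : β * (k.choose 2 : ℕ) ≤ ((G.induce (S : Set V)).edgeSet.ncard : ℝ)) :
    ∃ A : Finset (Sym2 V), GoodM G S A ∧ A.card = M := by
  classical
  rcases Nat.eq_zero_or_pos M with hM0 | hM1
  · exact ⟨∅, ⟨by simp, by simp, by simp⟩, by simp [hM0]⟩
  -- setup real facts
  have hsβ0 : 0 ≤ Real.sqrt β := Real.sqrt_nonneg β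
  have hsβ1 : Real.sqrt β ≤ 1 := by
    have h := Real.sqrt_le_sqrt hβ1
    rwa [Real.sqrt_one] at h
  have hsc0 : 0 ≤ Real.sqrt (1 - β) := Real.sqrt_nonneg _
  have hsc1 : Real.sqrt (1 - β) ≤ 1 := by
    have h := Real.sqrt_le_sqrt (show 1 - β ≤ 1 by linarith)
    rwa [Real.sqrt_one] at h
  have hmin0 : 0 ≤ min (Real.sqrt β / 2) (1 - Real.sqrt (1 - β)) :=
    le_min (by linarith) (by linarith)
  have hμ0 : 0 ≤ μ := by
    rw [hμ]; exact mul_nonneg hmin0 (Nat.cast_nonneg k)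
  have hMμ : (M : ℝ) ≤ μ := by rw [hMdef]; exact Nat.floor_le hμ0
  have hμ1 : μ ≤ Real.sqrt β * k / 2 := by
    rw [hμ]
    have := mul_le_mul_of_nonneg_right
      (min_le_left (Real.sqrt β / 2) (1 - Real.sqrt (1 - β))) (Nat.cast_nonneg (α := ℝ) k)
    linarith
  have hμ2 : μ ≤ (1 - Real.sqrt (1 - β)) * k := by
    rw [hμ]
    exact mul_le_mul_of_nonneg_right
      (min_le_right (Real.sqrt β / 2) (1 - Real.sqrt (1 - β))) (Nat.cast_nonneg (α := ℝ) k)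
  have hM1R : (1:ℝ) ≤ (M:ℝ) := by exact_mod_cast hM1
  have hk2 : (2:ℝ) ≤ (k:ℝ) := by nlinarith
  have hSne : S.Nonempty := by
    rw [← Finset.card_pos, hk]
    have : (0:ℝ) < k := by linarith
    exact_mod_cast this
  set v₀ : V := hSne.choose with hv₀
  by_contra hno
  push_neg at hno
  have hmatch : ∀ B ⊆ Efin G v₀ S, Disj B → B.card ≤ M - 1 := by
    intro B hB hD
    by_contra hBc
    push_neg at hBc
    have hBM : M ≤ B.card := by omega
    obtain ⟨B', hB'B, hB'card⟩ := Finset.exists_subset_card_eq hBM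
    have hD' : Disj B' := fun p hp r hr => hD p (hB'B hp) r (hB'B hr)
    obtain ⟨A, hgood, hcard⟩ := pairs_to_good G v₀ S (fun p hp => hB (hB'B hp)) hD'
    exact hno A hgood (by rw [hcard, hB'card])
  have hE : ∀ p ∈ Efin G v₀ S, p.1 < p.2 ∧ p.2 < k := by
    intro p hp
    obtain ⟨h1, h2, _⟩ := (mem_Efin G).mp hp
    exact ⟨h1, hk ▸ h2⟩
  obtain ⟨l, hl, hcount⟩ := EG_core hE hmatch
  have hecard : ((G.induce (S : Set V)).edgeSet.ncard) = (Efin G v₀ S).card := Efin_card G v₀ S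
  rw [hecard] at he
  -- numeric contradiction
  have hMs : ((M - 1 : ℕ) : ℝ) = (M : ℝ) - 1 := by
    rw [Nat.cast_sub hM1]; simp
  refine numeric_contra (a := Real.sqrt β) (c := Real.sqrt (1 - β)) (k := k) (s := M - 1)
    (l := l) (e := (Efin G v₀ S).card) hsβ0 hsβ1 hsc0 hsc1 ?_ ?_ ?_ hl ?_ hcount
  · rw [Real.sq_sqrt hβ0, Real.sq_sqrt (by linarith : (0:ℝ) ≤ 1 - β)]; ring
  · rw [hMs]; linarith
  · rw [hMs]; linarith
  · rw [Real.sq_sqrt hβ0]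
    rw [Nat.cast_choose_two] at he
    linarith


end EGc

open EGc

open Real in
/-- For a graph `G` on `n ≥ 1` vertices with `m ≥ 1` edges, any `k` and real `0 ≤ β ≤ 1`,
the number of `k`-subsets `S` such that `G[S]` has at least `β * C(k,2)` edges is at most
`m ^ (μ + 1) * n ^ (k - 2μ + 2)`, where `μ = min {√β / 2, 1 - √(1-β)} * k`. -/
theorem count_beta_covered {V : Type} [Fintype V] (n m k : ℕ) (β μ : ℝ)
    (hβ0 : 0 ≤ β) (hβ1 : β ≤ 1) (hm : 1 ≤ m) (hn : 1 ≤ n)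
    (hμ : μ = min (Real.sqrt β / 2) (1 - Real.sqrt (1 - β)) * k)
    (G : SimpleGraph V) (hcard : Fintype.card V = n) (hedges : G.edgeSet.ncard = m) :
    (({S : Finset V | S.card = k ∧
          β * (k.choose 2 : ℕ) ≤ ((G.induce (S : Set V)).edgeSet.ncard : ℝ)}.ncard : ℕ) : ℝ)
      ≤ (m : ℝ) ^ (μ + 1) * (n : ℝ) ^ ((k : ℝ) - 2 * μ + 2) := by
  classical
  set SS := {S : Finset V | S.card = k ∧
      β * (k.choose 2 : ℕ) ≤ ((G.induce (S : Set V)).edgeSet.ncard : ℝ)} with hSS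
  set M := Nat.floor μ with hMdef
  have hsβ0 : 0 ≤ Real.sqrt β := Real.sqrt_nonneg β
  have hsβ1 : Real.sqrt β ≤ 1 := by
    have h := Real.sqrt_le_sqrt hβ1
    rwa [Real.sqrt_one] at h
  have hsc0 : 0 ≤ Real.sqrt (1 - β) := Real.sqrt_nonneg _
  have hsc1 : Real.sqrt (1 - β) ≤ 1 := by
    have h := Real.sqrt_le_sqrt (show 1 - β ≤ 1 by linarith)
    rwa [Real.sqrt_one] at h
  have hmin0 : 0 ≤ min (Real.sqrt β / 2) (1 - Real.sqrt (1 - β)) :=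
    le_min (by linarith) (by linarith)
  have hμ0 : 0 ≤ μ := by
    rw [hμ]; exact mul_nonneg hmin0 (Nat.cast_nonneg k)
  have hMμ : (M : ℝ) ≤ μ := by rw [hMdef]; exact Nat.floor_le hμ0
  have hμM1 : μ < (M : ℝ) + 1 := by
    rw [hMdef]; exact_mod_cast Nat.lt_floor_add_one μ
  have hμk : 2 * μ ≤ (k : ℝ) := by
    rw [hμ]
    have h1 : min (Real.sqrt β / 2) (1 - Real.sqrt (1 - β)) ≤ Real.sqrt β / 2 := min_le_left _ _
    nlinarith [Nat.cast_nonneg (α := ℝ) k]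
  have h2M : 2 * M ≤ k := by
    have h : (2 * (M:ℝ)) ≤ (k:ℝ) := by linarith
    exact_mod_cast h
  rw [Set.ncard_eq_toFinset_card _ (Set.toFinite SS)]
  have hmemSS : ∀ S : Finset V, S ∈ SS → S.card = k ∧
      β * (k.choose 2 : ℕ) ≤ ((G.induce (S : Set V)).edgeSet.ncard : ℝ) := by
    intro S hS
    rw [hSS] at hS
    exact hS
  have hex : ∀ S : Finset V, ∃ A : Finset (Sym2 V),
      S ∈ SS → (GoodM G S A ∧ A.card = M) := by
    intro S
    by_cases hS : S ∈ SS
    · obtain ⟨A, h⟩ := exists_good G S k M β μ hβ0 hβ1 hμ hMdef (hmemSS S hS).1 (hmemSS S hS).2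
      exact ⟨A, fun _ => h⟩
    · exact ⟨∅, fun h => absurd h hS⟩
  choose fA hfA using hex
  have hedgecard : G.edgeFinset.card = m := by
    rw [← hedges, Set.ncard_eq_toFinset_card']
    exact congrArg Finset.card (Set.toFinset_congr rfl)
  set T := (G.edgeFinset.powersetCard M) ×ˢ ((Finset.univ : Finset V).powersetCard (k - 2 * M))
    with hT
  have hinj : (Set.toFinite SS).toFinset.card ≤ T.card := by
    apply Finset.card_le_card_of_injOn
      (fun S => (fA S, S.filter (fun v => ∀ e ∈ fA S, v ∉ e)))
    · intro S hS
      rw [Finset.mem_coe, Set.Finite.mem_toFinset] at hS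
      obtain ⟨hgood, hAcard⟩ := hfA S hS
      rw [hT, Finset.mem_coe, Finset.mem_product]
      dsimp only
      constructor
      · rw [Finset.mem_powersetCard]
        exact ⟨fun e he => (SimpleGraph.mem_edgeFinset).mpr (hgood.1 e he), hAcard⟩
      · rw [Finset.mem_powersetCard]
        refine ⟨Finset.subset_univ _, ?_⟩
        have hScard : S.card = k := (hmemSS S hS).1
        have htouch := touched_card' (S := S) (fA S)
            (fun e he => SimpleGraph.not_isDiag_of_mem_edgeSet G (hgood.1 e he))
            (fun e he v hv => hgood.2.1 e he v hv)
            (fun e he e' he' hne v hv => hgood.2.2 e he e' he' hne v hv)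
            (S.filter (fun v => ¬ ∀ e ∈ fA S, v ∉ e))
            (by
              intro v
              rw [Finset.mem_filter]
              constructor
              · rintro ⟨hv, h⟩
                push_neg at h
                exact ⟨hv, h⟩
              · rintro ⟨hv, e, he, hve⟩
                exact ⟨hv, fun h => absurd hve (h e he)⟩)
        rw [hAcard] at htouch
        have hsplit : (S.filter (fun v => ∀ e ∈ fA S, v ∉ e)).card
            + (S.filter (fun v => ¬ ∀ e ∈ fA S, v ∉ e)).card = S.card := by
          rw [← Finset.card_union_of_disjoint (Finset.disjoint_filter_filter_not S S _)]
          congr 1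
          rw [Finset.filter_union_filter_not_eq]
        omega
    · intro S₁ h1 S₂ h2 heq
      rw [Finset.mem_coe, Set.Finite.mem_toFinset] at h1 h2
      simp only [Prod.mk.injEq] at heq
      obtain ⟨hA12, hL12⟩ := heq
      have hdir : ∀ S S' : Finset V, S ∈ SS → S' ∈ SS →
          fA S = fA S' →
          S.filter (fun v => ∀ e ∈ fA S, v ∉ e) = S'.filter (fun v => ∀ e ∈ fA S', v ∉ e) →
          ∀ v ∈ S, v ∈ S' := by
        intro S S' hS hS' hfe hfl v hv
        by_cases hvt : ∃ e ∈ fA S, v ∈ e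
        · obtain ⟨e, he, hve⟩ := hvt
          rw [hfe] at he
          exact (hfA S' hS').1.2.1 e he v hve
        · push_neg at hvt
          have : v ∈ S.filter (fun v => ∀ e ∈ fA S, v ∉ e) :=
            Finset.mem_filter.mpr ⟨hv, hvt⟩
          rw [hfl] at this
          exact (Finset.mem_filter.mp this).1
      apply Finset.Subset.antisymm
      · intro v hv; exact hdir S₁ S₂ h1 h2 hA12 hL12 v hv
      · intro v hv; exact hdir S₂ S₁ h2 h1 hA12.symm hL12.symm v hv
  have hTcard : T.card = m.choose M * n.choose (k - 2 * M) := by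
    rw [hT, Finset.card_product, Finset.card_powersetCard, Finset.card_powersetCard,
      hedgecard, Finset.card_univ, hcard]
  have hchain : (Set.toFinite SS).toFinset.card ≤ m ^ M * n ^ (k - 2 * M) := by
    calc (Set.toFinite SS).toFinset.card ≤ T.card := hinj
      _ = m.choose M * n.choose (k - 2 * M) := hTcard
      _ ≤ m ^ M * n ^ (k - 2 * M) :=
          Nat.mul_le_mul (Nat.choose_le_pow m M) (Nat.choose_le_pow n (k - 2 * M))
  have hksub : ((k - 2 * M : ℕ) : ℝ) = (k : ℝ) - 2 * M := by
    rw [Nat.cast_sub h2M]; push_cast; ring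
  have hm1 : (1:ℝ) ≤ (m:ℝ) := by exact_mod_cast hm
  have hn1 : (1:ℝ) ≤ (n:ℝ) := by exact_mod_cast hn
  calc (((Set.toFinite SS).toFinset.card : ℕ) : ℝ)
      ≤ ((m ^ M * n ^ (k - 2 * M) : ℕ) : ℝ) := Nat.cast_le.mpr hchain
    _ = (m : ℝ) ^ (M : ℕ) * (n : ℝ) ^ ((k - 2 * M : ℕ)) := by push_cast; ring
    _ = (m : ℝ) ^ ((M : ℕ) : ℝ) * (n : ℝ) ^ (((k - 2 * M : ℕ) : ℕ) : ℝ) := by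
        rw [Real.rpow_natCast, Real.rpow_natCast]
    _ ≤ (m : ℝ) ^ (μ + 1) * (n : ℝ) ^ ((k : ℝ) - 2 * μ + 2) := by
        apply mul_le_mul
        · exact Real.rpow_le_rpow_of_exponent_le hm1 (by linarith)
        · apply Real.rpow_le_rpow_of_exponent_le hn1
          rw [hksub]
          linarith
        · exact Real.rpow_nonneg (by linarith) _
        · exact Real.rpow_nonneg (by linarith) _
end

section
/- Every graph H on k vertices with t ≥ 1 edges contains a matching of size at least ⌊min{√β/2, 1 − √(1−β)}·k⌋, where β = t / C(k,2). -/
set_option linter.unusedSectionVars false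
set_option linter.unusedVariables false

open Finset

namespace EGmatch

variable {V : Type} [Fintype V] [DecidableEq V]

/-- endpoints of a `Sym2` as a finset -/
def ends (e : Sym2 V) : Finset V := Finset.univ.filter (· ∈ e)

lemma mem_ends {v : V} {e : Sym2 V} : v ∈ ends e ↔ v ∈ e := by
  simp [ends]

lemma ends_mk {a b : V} (hab : a ≠ b) : ends s(a, b) = {a, b} := by
  ext v; simp [mem_ends, Sym2.mem_iff]

lemma card_ends {e : Sym2 V} (he : ¬ e.IsDiag) : (ends e).card = 2 := by
  induction e with
  | _ a b =>
    rw [Sym2.mk_isDiag_iff] at he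
    rw [ends_mk he, Finset.card_insert_of_notMem (by simp [he]), Finset.card_singleton]

/-- support of an edge finset -/
def vset (E : Finset (Sym2 V)) : Finset V := E.biUnion ends

lemma mem_vset {v : V} {E : Finset (Sym2 V)} : v ∈ vset E ↔ ∃ e ∈ E, v ∈ e := by
  simp [vset, mem_ends]

/-- graph-like : no loops -/
def Gr (E : Finset (Sym2 V)) : Prop := ∀ e ∈ E, ¬ e.IsDiag

lemma card_vset_le {E : Finset (Sym2 V)} (hE : Gr E) : (vset E).card ≤ 2 * E.card := by
  calc (vset E).card ≤ ∑ e ∈ E, (ends e).card := Finset.card_biUnion_le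
    _ = ∑ e ∈ E, 2 := by
        apply Finset.sum_congr rfl; intro e he; exact card_ends (hE e he)
    _ = 2 * E.card := by rw [Finset.sum_const, smul_eq_mul, mul_comm]

/-- degree via neighbours -/
def deg (E : Finset (Sym2 V)) (v : V) : ℕ :=
  (Finset.univ.filter (fun w => s(v, w) ∈ E ∧ w ≠ v)).card

lemma filter_mem_eq_image {E : Finset (Sym2 V)} (hE : Gr E) (v : V) :
    E.filter (v ∈ ·) =
      (Finset.univ.filter (fun w => s(v, w) ∈ E ∧ w ≠ v)).image (fun w => s(v, w)) := by
  ext e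
  simp only [mem_filter, mem_image, mem_univ, true_and]
  constructor
  · rintro ⟨heE, hv⟩
    obtain ⟨w, rfl⟩ := Sym2.mem_iff_exists.mp hv
    refine ⟨w, ⟨heE, ?_⟩, rfl⟩
    intro h; exact hE _ heE (by simp [Sym2.mk_isDiag_iff, h.symm])
  · rintro ⟨w, ⟨hw, _⟩, rfl⟩
    exact ⟨hw, Sym2.mem_mk_left _ _⟩

lemma card_filter_mem {E : Finset (Sym2 V)} (hE : Gr E) (v : V) :
    (E.filter (v ∈ ·)).card = deg E v := by
  rw [filter_mem_eq_image hE v, deg]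
  apply Finset.card_image_of_injOn
  intro a _ b _ hab
  exact (Sym2.congr_right).mp hab

lemma deg_lt_card_vset {E : Finset (Sym2 V)} (v : V) (hv : v ∈ vset E) :
    deg E v < (vset E).card := by
  have hsub : Finset.univ.filter (fun w => s(v, w) ∈ E ∧ w ≠ v) ⊆ (vset E).erase v := by
    intro w hw
    simp only [mem_filter, mem_univ, true_and] at hw
    exact Finset.mem_erase.mpr ⟨hw.2, mem_vset.mpr ⟨_, hw.1, Sym2.mem_mk_right _ _⟩⟩
  calc deg E v ≤ ((vset E).erase v).card := Finset.card_le_card hsub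
    _ < (vset E).card := Finset.card_erase_lt_of_mem hv

lemma sum_deg {E : Finset (Sym2 V)} (hE : Gr E) :
    ∑ v ∈ vset E, deg E v = 2 * E.card := by
  have h1 : ∀ v ∈ vset E, deg E v = (E.filter (v ∈ ·)).card := fun v _ =>
    (card_filter_mem hE v).symm
  rw [Finset.sum_congr rfl h1]
  have h2 : ∀ v, (E.filter (v ∈ ·)).card = ∑ e ∈ E, if v ∈ e then 1 else 0 := fun v => by
    rw [Finset.card_filter]
  rw [Finset.sum_congr rfl (fun v _ => h2 v), Finset.sum_comm]
  have h3 : ∀ e ∈ E, (∑ v ∈ vset E, if v ∈ e then 1 else 0) = 2 := by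
    intro e he
    rw [← Finset.card_filter]
    have : (vset E).filter (· ∈ e) = ends e := by
      ext v
      simp only [mem_filter, mem_ends, and_iff_right_iff_imp]
      exact fun hv => mem_vset.mpr ⟨e, he, hv⟩
    rw [this, card_ends (hE e he)]
  rw [Finset.sum_congr rfl h3, Finset.sum_const, smul_eq_mul, mul_comm]

lemma two_mul_card_le {E : Finset (Sym2 V)} (hE : Gr E) :
    2 * E.card ≤ (vset E).card * ((vset E).card - 1) := by
  rw [← sum_deg hE]
  calc ∑ v ∈ vset E, deg E v ≤ ∑ _v ∈ vset E, ((vset E).card - 1) := by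
        apply Finset.sum_le_sum
        intro v hv
        have := deg_lt_card_vset v hv
        omega
    _ = (vset E).card * ((vset E).card - 1) := by rw [Finset.sum_const, smul_eq_mul]

/-- matching -/
def IsMat (E M : Finset (Sym2 V)) : Prop :=
  M ⊆ E ∧ ∀ e ∈ M, ∀ f ∈ M, e ≠ f → ∀ v, v ∈ e → v ∉ f

lemma isMat_empty (E : Finset (Sym2 V)) : IsMat E ∅ := by
  constructor
  · exact Finset.empty_subset _
  · intro e he; simp at he

lemma isMat_singleton {E : Finset (Sym2 V)} {e : Sym2 V} (he : e ∈ E) : IsMat E {e} := by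
  constructor
  · simpa using he
  · intro a ha b hb hab
    simp only [Finset.mem_singleton] at ha hb
    exact absurd (ha.trans hb.symm) hab

lemma isMat_mono {E M M' : Finset (Sym2 V)} (h : IsMat E M) (hM' : M' ⊆ M) : IsMat E M' :=
  ⟨hM'.trans h.1, fun e he f hf => h.2 e (hM' he) f (hM' hf)⟩

lemma isMat_of_subset {E E' M : Finset (Sym2 V)} (h : IsMat E' M) (hE : E' ⊆ E) : IsMat E M :=
  ⟨h.1.trans hE, h.2⟩

lemma not_mem_vset_of_mat {E M : Finset (Sym2 V)} {v : V} (h : v ∉ vset M) {e : Sym2 V}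
    (he : e ∈ M) : v ∉ e := fun hv => h (mem_vset.mpr ⟨e, he, hv⟩)

lemma isMat_insert {E M : Finset (Sym2 V)} (h : IsMat E M) {e : Sym2 V} (he : e ∈ E)
    (hd : ∀ v ∈ e, v ∉ vset M) : IsMat E (insert e M) ∧ (insert e M).card = M.card + 1 := by
  have henm : e ∉ M := by
    intro hem
    obtain ⟨a, b⟩ := e
    exact hd a (Sym2.mem_mk_left _ _) (mem_vset.mpr ⟨_, hem, Sym2.mem_mk_left _ _⟩)
  refine ⟨⟨?_, ?_⟩, Finset.card_insert_of_notMem henm⟩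
  · intro f hf
    rcases Finset.mem_insert.mp hf with rfl | hf
    · exact he
    · exact h.1 hf
  · intro f hf g hg hfg v hvf
    have hf' := Finset.mem_insert.mp hf
    have hg' := Finset.mem_insert.mp hg
    rcases hf' with hf' | hf'
    · rcases hg' with hg' | hg'
      · exact absurd (hf'.trans hg'.symm) hfg
      · subst hf'
        exact fun hvg => hd v hvf (mem_vset.mpr ⟨g, hg', hvg⟩)
    · rcases hg' with hg' | hg'
      · subst hg'
        intro hvg
        exact hd v hvg (mem_vset.mpr ⟨f, hf', hvf⟩)
      · exact h.2 f hf' g hg' hfg v hvf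

/-- existence of a maximum matching -/
lemma exists_max_matching (E : Finset (Sym2 V)) :
    ∃ M₀, IsMat E M₀ ∧ ∀ M, IsMat E M → M.card ≤ M₀.card := by
  classical
  have hne : (E.powerset.filter (fun M => IsMat E M)).Nonempty := by
    refine ⟨∅, ?_⟩
    simp only [Finset.mem_filter, Finset.mem_powerset]
    exact ⟨Finset.empty_subset _, isMat_empty E⟩
  obtain ⟨M₀, hM₀, hmax⟩ := Finset.exists_max_image _ Finset.card hne
  simp only [Finset.mem_filter, Finset.mem_powerset] at hM₀
  refine ⟨M₀, hM₀.2, fun M hM => ?_⟩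
  apply hmax
  simp only [Finset.mem_filter, Finset.mem_powerset]
  exact ⟨hM.1, hM⟩


section LemmaA

variable {E M₀ : Finset (Sym2 V)}

/-- neighbours of an unmatched vertex are matched -/
lemma nbr_matched (hM₀ : IsMat E M₀) (hmax : ∀ M, IsMat E M → M.card ≤ M₀.card)
    (hu : u ∉ vset M₀) {w : V} (hw : s(u, w) ∈ E) (hwu : w ≠ u)
    (hwM : w ∉ vset M₀) : False := by
  have hins := isMat_insert hM₀ hw (by
    intro v hv
    rcases Sym2.mem_iff.mp hv with rfl | rfl
    · exact hu
    · exact hwM)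
  have := hmax _ hins.1
  omega

/-- the length-5 augmenting path contradiction -/
lemma augment5 (hE : Gr E) (hM₀ : IsMat E M₀) (hmax : ∀ M, IsMat E M → M.card ≤ M₀.card)
    {u u' x y : V} (hu : u ∉ vset M₀) (hu' : u' ∉ vset M₀) (huu' : u ≠ u')
    {f : Sym2 V} (hf : f ∈ M₀) (hxf : x ∈ f) (hyf : y ∈ f) (hxy : x ≠ y)
    (hux : s(u, x) ∈ E) (huy : s(u', y) ∈ E) : False := by
  set M₁ := M₀.erase f with hM₁
  have hM₁sub : M₁ ⊆ M₀ := Finset.erase_subset _ _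
  have hmatM₁ : IsMat E M₁ := isMat_mono hM₀ hM₁sub
  have hxM₁ : x ∉ vset M₁ := by
    intro hx
    obtain ⟨g, hg, hxg⟩ := mem_vset.mp hx
    have hgf : g ≠ f := Finset.ne_of_mem_erase hg
    exact hM₀.2 g (hM₁sub hg) f hf hgf x hxg hxf
  have hyM₁ : y ∉ vset M₁ := by
    intro hy
    obtain ⟨g, hg, hyg⟩ := mem_vset.mp hy
    have hgf : g ≠ f := Finset.ne_of_mem_erase hg
    exact hM₀.2 g (hM₁sub hg) f hf hgf y hyg hyf
  have huM₁ : u ∉ vset M₁ := fun h => hu (mem_vset.mp h |>.elim fun g hg =>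
    mem_vset.mpr ⟨g, hM₁sub hg.1, hg.2⟩)
  have hu'M₁ : u' ∉ vset M₁ := fun h => hu' (mem_vset.mp h |>.elim fun g hg =>
    mem_vset.mpr ⟨g, hM₁sub hg.1, hg.2⟩)
  have hxv : x ∈ vset M₀ := mem_vset.mpr ⟨f, hf, hxf⟩
  have hyv : y ∈ vset M₀ := mem_vset.mpr ⟨f, hf, hyf⟩
  -- insert s(u', y)
  have h2 := isMat_insert hmatM₁ huy (by
    intro v hv
    rcases Sym2.mem_iff.mp hv with rfl | rfl
    · exact hu'M₁
    · exact hyM₁)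
  set M₂ := insert s(u', y) M₁ with hM₂
  -- insert s(u, x)
  have hxM₂ : ∀ v ∈ s(u, x), v ∉ vset M₂ := by
    intro v hv hvM₂
    obtain ⟨g, hg, hvg⟩ := mem_vset.mp hvM₂
    rcases Finset.mem_insert.mp hg with rfl | hg
    · rcases Sym2.mem_iff.mp hv with rfl | rfl
      · rcases Sym2.mem_iff.mp hvg with rfl | rfl
        · exact huu' rfl
        · exact hu hyv
      · rcases Sym2.mem_iff.mp hvg with rfl | rfl
        · exact hu' hxv
        · exact hxy rfl
    · rcases Sym2.mem_iff.mp hv with rfl | rfl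
      · exact huM₁ (mem_vset.mpr ⟨g, hg, hvg⟩)
      · exact hxM₁ (mem_vset.mpr ⟨g, hg, hvg⟩)
  have h3 := isMat_insert h2.1 hux hxM₂
  have hcard : M₁.card = M₀.card - 1 := Finset.card_erase_of_mem hf
  have hfM : f ∈ M₀ := hf
  have h0 : 1 ≤ M₀.card := Finset.card_pos.mpr ⟨f, hf⟩
  have := hmax _ h3.1
  rw [h3.2, h2.2, hcard] at this
  omega

/-- key counting: two unmatched vertices have small degree sum -/
lemma degree_sum_le (hE : Gr E) (hM₀ : IsMat E M₀)
    (hmax : ∀ M, IsMat E M → M.card ≤ M₀.card) (hu : u ∉ vset M₀) (hu' : u' ∉ vset M₀) (huu' : u ≠ u') :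
    deg E u + deg E u' ≤ 2 * M₀.card := by
  set Nu := Finset.univ.filter (fun w => s(u, w) ∈ E ∧ w ≠ u) with hNu
  set Nu' := Finset.univ.filter (fun w => s(u', w) ∈ E ∧ w ≠ u') with hNu'
  have hNuM : Nu ⊆ vset M₀ := by
    intro w hw
    simp only [hNu, Finset.mem_filter, Finset.mem_univ, true_and] at hw
    by_contra hwM
    exact nbr_matched hM₀ hmax hu hw.1 hw.2 hwM
  have hNu'M : Nu' ⊆ vset M₀ := by
    intro w hw
    simp only [hNu', Finset.mem_filter, Finset.mem_univ, true_and] at hw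
    by_contra hwM
    exact nbr_matched hM₀ hmax hu' hw.1 hw.2 hwM
  have key : ∀ f ∈ M₀, (Nu ∩ ends f).card + (Nu' ∩ ends f).card ≤ 2 := by
    intro f hf
    induction f with
    | _ x y =>
      have hxy : x ≠ y := by
        have := hE _ (hM₀.1 hf); rwa [Sym2.mk_isDiag_iff] at this
      rw [ends_mk hxy]
      have hc1 : ¬ (x ∈ Nu ∧ y ∈ Nu') := by
        rintro ⟨hx, hy⟩
        simp only [hNu, hNu', Finset.mem_filter, Finset.mem_univ, true_and] at hx hy
        exact augment5 hE hM₀ hmax hu hu' huu' hf (Sym2.mem_mk_left _ _)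
          (Sym2.mem_mk_right _ _) hxy hx.1 hy.1
      have hc2 : ¬ (y ∈ Nu ∧ x ∈ Nu') := by
        rintro ⟨hy, hx⟩
        simp only [hNu, hNu', Finset.mem_filter, Finset.mem_univ, true_and] at hx hy
        exact augment5 hE hM₀ hmax hu hu' huu' hf (Sym2.mem_mk_right _ _)
          (Sym2.mem_mk_left _ _) hxy.symm hy.1 hx.1
      by_cases hx : x ∈ Nu
      · have hyNu' : y ∉ Nu' := fun h => hc1 ⟨hx, h⟩
        by_cases hy : y ∈ Nu
        · have hxNu' : x ∉ Nu' := fun h => hc2 ⟨hy, h⟩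
          have : Nu' ∩ {x, y} = ∅ := by
            ext v; simp only [Finset.mem_inter, Finset.mem_insert, Finset.mem_singleton,
              Finset.notMem_empty, iff_false]
            rintro ⟨hv, rfl | rfl⟩ <;> [exact hxNu' hv; exact hyNu' hv]
          rw [this]
          simp only [Finset.card_empty, add_zero]
          calc (Nu ∩ {x, y}).card ≤ ({x, y} : Finset V).card := Finset.card_le_card
                Finset.inter_subset_right
            _ ≤ 2 := Finset.card_insert_le _ _ |>.trans (by simp)
        · have h1 : Nu ∩ {x, y} ⊆ {x} := by
            intro v hv
            simp only [Finset.mem_inter, Finset.mem_insert, Finset.mem_singleton] at hv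
            rcases hv.2 with rfl | rfl
            · simp
            · exact absurd hv.1 hy
          have h2 : Nu' ∩ {x, y} ⊆ {x} := by
            intro v hv
            simp only [Finset.mem_inter, Finset.mem_insert, Finset.mem_singleton] at hv
            rcases hv.2 with rfl | rfl
            · simp
            · exact absurd hv.1 hyNu'
          calc (Nu ∩ {x, y}).card + (Nu' ∩ {x, y}).card
              ≤ ({x} : Finset V).card + ({x} : Finset V).card :=
              Nat.add_le_add (Finset.card_le_card h1) (Finset.card_le_card h2)
            _ = 2 := by simp
      · by_cases hy : y ∈ Nu
        · have hxNu' : x ∉ Nu' := fun h => hc2 ⟨hy, h⟩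
          have h1 : Nu ∩ {x, y} ⊆ {y} := by
            intro v hv
            simp only [Finset.mem_inter, Finset.mem_insert, Finset.mem_singleton] at hv
            rcases hv.2 with rfl | rfl
            · exact absurd hv.1 hx
            · simp
          have h2 : Nu' ∩ {x, y} ⊆ {y} := by
            intro v hv
            simp only [Finset.mem_inter, Finset.mem_insert, Finset.mem_singleton] at hv
            rcases hv.2 with rfl | rfl
            · exact absurd hv.1 hxNu'
            · simp
          calc (Nu ∩ {x, y}).card + (Nu' ∩ {x, y}).card
              ≤ ({y} : Finset V).card + ({y} : Finset V).card :=
              Nat.add_le_add (Finset.card_le_card h1) (Finset.card_le_card h2)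
            _ = 2 := by simp
        · have h1 : Nu ∩ {x, y} = ∅ := by
            ext v; simp only [Finset.mem_inter, Finset.mem_insert, Finset.mem_singleton,
              Finset.notMem_empty, iff_false]
            rintro ⟨hv, rfl | rfl⟩ <;> [exact hx hv; exact hy hv]
          rw [h1]
          simp only [Finset.card_empty, zero_add]
          calc (Nu' ∩ {x, y}).card ≤ ({x, y} : Finset V).card := Finset.card_le_card
                Finset.inter_subset_right
            _ ≤ 2 := Finset.card_insert_le _ _ |>.trans (by simp)
  -- now the covering count
  have hcov : ∀ (N : Finset V), N ⊆ vset M₀ → N.card ≤ ∑ f ∈ M₀, (N ∩ ends f).card := by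
    intro N hN
    have : N = M₀.biUnion (fun f => N ∩ ends f) := by
      ext v
      simp only [Finset.mem_biUnion, Finset.mem_inter]
      constructor
      · intro hv
        obtain ⟨f, hf, hvf⟩ := mem_vset.mp (hN hv)
        exact ⟨f, hf, hv, by simpa [ends] using hvf⟩
      · rintro ⟨f, hf, hv, _⟩; exact hv
    calc N.card = (M₀.biUnion (fun f => N ∩ ends f)).card := by rw [← this]
      _ ≤ ∑ f ∈ M₀, (N ∩ ends f).card := Finset.card_biUnion_le
  have h1 := hcov Nu hNuM
  have h2 := hcov Nu' hNu'M
  have : deg E u + deg E u' ≤ ∑ f ∈ M₀, ((Nu ∩ ends f).card + (Nu' ∩ ends f).card) := by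
    rw [Finset.sum_add_distrib]
    exact Nat.add_le_add h1 h2
  calc deg E u + deg E u' ≤ ∑ f ∈ M₀, ((Nu ∩ ends f).card + (Nu' ∩ ends f).card) := this
    _ ≤ ∑ _f ∈ M₀, 2 := Finset.sum_le_sum key
    _ = 2 * M₀.card := by rw [Finset.sum_const, smul_eq_mul, mul_comm]

end LemmaA

section Deletion

variable {E : Finset (Sym2 V)}

def del (E : Finset (Sym2 V)) (v : V) : Finset (Sym2 V) := E.filter (¬ v ∈ ·)

lemma del_subset (v : V) : del E v ⊆ E := Finset.filter_subset _ _

lemma gr_del (hE : Gr E) (v : V) : Gr (del E v) := fun e he => hE e (del_subset v he)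

lemma not_mem_of_mem_del {v : V} {e : Sym2 V} (he : e ∈ del E v) : v ∉ e :=
  (Finset.mem_filter.mp he).2

lemma card_del (hE : Gr E) (v : V) : E.card = (del E v).card + deg E v := by
  rw [← card_filter_mem hE v, del]
  have := Finset.card_filter_add_card_filter_not (s := E) (p := (v ∈ ·))
  omega

lemma vset_del_subset (v : V) : vset (del E v) ⊆ (vset E).erase v := by
  intro w hw
  obtain ⟨e, he, hwe⟩ := mem_vset.mp hw
  refine Finset.mem_erase.mpr ⟨?_, mem_vset.mpr ⟨e, del_subset v he, hwe⟩⟩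
  rintro rfl
  exact not_mem_of_mem_del he hwe

/-- reduction: deleting a high-degree vertex drops the matching bound -/
lemma hm_del_of_big_deg {m : ℕ} (hE : Gr E) (hHm : ∀ M, IsMat E M → M.card ≤ m + 1)
    {v : V} (hv : 2 * m + 3 ≤ deg E v) :
    ∀ M, IsMat (del E v) M → M.card ≤ m := by
  intro M hM
  by_contra hc
  push_neg at hc
  have hME : IsMat E M := isMat_of_subset hM (del_subset v)
  have hMcard : M.card = m + 1 := le_antisymm (hHm M hME) hc
  have hvsetM : (vset M).card ≤ 2 * m + 2 := by
    have := card_vset_le (fun e he => hE e (hME.1 he))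
    omega
  -- find a neighbour of v outside vset M
  set Nv := Finset.univ.filter (fun w => s(v, w) ∈ E ∧ w ≠ v) with hNv
  have hNvcard : 2 * m + 3 ≤ Nv.card := hv
  have : (Nv \ vset M).Nonempty := by
    rw [← Finset.card_pos]
    have hle : (Nv ∩ vset M).card ≤ 2 * m + 2 :=
      le_trans (Finset.card_le_card Finset.inter_subset_right) hvsetM
    have := Finset.card_sdiff_add_card_inter Nv (vset M)
    omega
  obtain ⟨w, hw⟩ := this
  have hwNv : w ∈ Nv := (Finset.mem_sdiff.mp hw).1
  have hwM : w ∉ vset M := (Finset.mem_sdiff.mp hw).2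
  simp only [hNv, Finset.mem_filter, Finset.mem_univ, true_and] at hwNv
  have hvM : v ∉ vset M := by
    intro hvM
    obtain ⟨e, he, hve⟩ := mem_vset.mp hvM
    exact not_mem_of_mem_del (hM.1 he) hve
  have hins := isMat_insert hME hwNv.1 (by
    intro z hz
    rcases Sym2.mem_iff.mp hz with rfl | rfl
    · exact hvM
    · exact hwM)
  have := hHm _ hins.1
  omega

/-- reduction: deleting both endpoints of an edge drops the matching bound -/
lemma hm_del_edge {m : ℕ} (hHm : ∀ M, IsMat E M → M.card ≤ m + 1)
    {u w : V} (huw : s(u, w) ∈ E) :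
    ∀ M, IsMat (del (del E u) w) M → M.card ≤ m := by
  intro M hM
  by_contra hc
  push_neg at hc
  have hME : IsMat E M := isMat_of_subset hM ((del_subset w).trans (del_subset u))
  have huM : ∀ e ∈ M, u ∉ e := fun e he =>
    not_mem_of_mem_del (del_subset w (hM.1 he))
  have hwM : ∀ e ∈ M, w ∉ e := fun e he => not_mem_of_mem_del (hM.1 he)
  have hins := isMat_insert hME huw (by
    intro z hz hzM
    obtain ⟨e, he, hze⟩ := mem_vset.mp hzM
    rcases Sym2.mem_iff.mp hz with rfl | rfl
    · exact huM e he hze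
    · exact hwM e he hze)
  have := hHm _ hins.1
  omega

end Deletion

lemma deg_mono {E E' : Finset (Sym2 V)} (h : E' ⊆ E) (v : V) : deg E' v ≤ deg E v := by
  apply Finset.card_le_card
  intro w hw
  simp only [Finset.mem_filter] at *
  exact ⟨hw.1, h hw.2.1, hw.2.2⟩

lemma mem_vset_of_deg_pos {E : Finset (Sym2 V)} {v : V} (h : 0 < deg E v) : v ∈ vset E := by
  rw [deg, Finset.card_pos] at h
  obtain ⟨w, hw⟩ := h
  simp only [Finset.mem_filter, Finset.mem_univ, true_and] at hw
  exact mem_vset.mpr ⟨_, hw.1, Sym2.mem_mk_left _ _⟩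

lemma arith3A (a b m : ℤ) (hm0 : 0 ≤ m) (h : 2*b ≤ 2*m*(2*m+1)) (hc : a ≤ b + (m+1) + (2*m+2)) :
    2*a ≤ 2*(m+1)*(2*(m+1)+1) := by nlinarith

lemma arith3B (a b m n n'' : ℤ) (hm0 : 0 ≤ m) (h : 2*b ≤ m*(m-1)+2*m*(n''-m))
    (hc : a ≤ b+(m+1)+(2*m+2)) (hn'' : n'' ≤ n-2) (hn4 : 2*m+4 ≤ n) :
    2*a ≤ (m+1)*((m+1)-1) + 2*(m+1)*(n-(m+1)) := by
  nlinarith [mul_nonneg hm0 (by linarith : (0:ℤ) ≤ n - 2 - n'')]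

/-- The Erdős–Gallai matching theorem. -/
theorem core (m : ℕ) : ∀ (E : Finset (Sym2 V)), Gr E → (∀ M, IsMat E M → M.card ≤ m) →
    2 * (E.card : ℤ) ≤
      max ((2 * m * (2 * m + 1) : ℤ)) (m * (m - 1) + 2 * m * (((vset E).card : ℤ) - m)) := by
  induction m with
  | zero =>
    intro E hE hHm
    have hE0 : E = ∅ := by
      by_contra h
      obtain ⟨e, he⟩ := Finset.nonempty_of_ne_empty h
      have := hHm {e} (isMat_singleton he)
      simp at this
    subst hE0
    simp
  | succ m IH =>
    intro E hE hHm
    set n := (vset E).card with hn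
    by_cases hsmall : n ≤ 2 * m + 3
    · -- small support case
      have h1 : 2 * E.card ≤ n * (n - 1) := two_mul_card_le hE
      have h2 : (2 * E.card : ℤ) ≤ (n : ℤ) * ((n : ℤ) - 1) := by
        calc (2 * E.card : ℤ) ≤ ((n * (n - 1) : ℕ) : ℤ) := by exact_mod_cast h1
          _ ≤ (n : ℤ) * ((n : ℤ) - 1) := by
              push_cast
              rcases Nat.eq_zero_or_pos n with h | h
              · simp [h]
              · rw [Nat.cast_sub h]
                push_cast; ring_nf; rfl
      refine le_trans ?_ (le_max_left _ _)
      have hn' : (n : ℤ) ≤ 2 * m + 3 := by exact_mod_cast hsmall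
      have hn0 : (0 : ℤ) ≤ (n : ℤ) := Nat.cast_nonneg n
      have hm0 : (0 : ℤ) ≤ (m : ℤ) := Nat.cast_nonneg m
      have key : (0:ℤ) ≤ ((2*(m:ℤ)+3) - n) * (n + (2*m+2)) :=
        mul_nonneg (by linarith) (by linarith)
      push_cast
      nlinarith [h2, key]
    · push_neg at hsmall
      have hn4 : (2 * m + 4 : ℤ) ≤ (n : ℤ) := by exact_mod_cast hsmall
      by_cases hbig : ∃ v, 2 * m + 3 ≤ deg E v
      · -- high degree vertex case
        obtain ⟨v, hv⟩ := hbig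
        have hvmem : v ∈ vset E := mem_vset_of_deg_pos (by omega)
        have hHm' := hm_del_of_big_deg hE hHm hv
        have hIH := IH (del E v) (gr_del hE v) hHm'
        set n' := (vset (del E v)).card with hn'
        have hn'le : n' ≤ n - 1 := by
          rw [hn', hn]
          calc (vset (del E v)).card ≤ ((vset E).erase v).card :=
            Finset.card_le_card (vset_del_subset v)
            _ = (vset E).card - 1 := Finset.card_erase_of_mem hvmem
        have hn'leZ : (n' : ℤ) ≤ (n : ℤ) - 1 := by
          have : n' + 1 ≤ n := by omega
          have := (Nat.cast_le (α := ℤ)).mpr this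
          push_cast at this; omega
        have hcard : E.card = (del E v).card + deg E v := card_del hE v
        have hdegle : deg E v ≤ n - 1 := by have := deg_lt_card_vset v hvmem; omega
        have hdegleZ : ((deg E v : ℤ)) ≤ (n : ℤ) - 1 := by
          have : deg E v + 1 ≤ n := by omega
          have := (Nat.cast_le (α := ℤ)).mpr this
          push_cast at this; omega
        have hcardZ : (E.card : ℤ) = ((del E v).card : ℤ) + (deg E v : ℤ) := by
          exact_mod_cast hcard
        rcases le_max_iff.mp hIH with h | h
        · by_cases hc : (n : ℤ) ≤ 4 * m + 4
          · refine le_trans ?_ (le_max_left _ _)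
            push_cast
            nlinarith [h, hcardZ, hdegleZ, hc]
          · push_neg at hc
            refine le_trans ?_ (le_max_right _ _)
            have hm0 : (0 : ℤ) ≤ (m : ℤ) := Nat.cast_nonneg m
            have key : (0:ℤ) ≤ (m:ℤ) * (2*(n:ℤ) - 5*m - 5) :=
              mul_nonneg hm0 (by linarith)
            push_cast
            nlinarith [h, hcardZ, hdegleZ, key]
        · refine le_trans ?_ (le_max_right _ _)
          have hm0 : (0 : ℤ) ≤ (m : ℤ) := Nat.cast_nonneg m
          have key : (0:ℤ) ≤ (m:ℤ) * ((n:ℤ) - 1 - (n':ℤ)) :=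
            mul_nonneg hm0 (by linarith)
          push_cast
          nlinarith [h, hcardZ, hdegleZ, key, hn4]
      · -- bounded degree case
        push_neg at hbig
        have hdegall : ∀ v, deg E v ≤ 2 * m + 2 := fun v => by have := hbig v; omega
        obtain ⟨M₀, hM₀, hmax⟩ := exists_max_matching E
        have hν : M₀.card ≤ m + 1 := hHm M₀ hM₀
        have hGrM₀ : Gr M₀ := fun e he => hE e (hM₀.1 he)
        have hvsetM₀ : (vset M₀).card ≤ 2 * m + 2 := by
          have := card_vset_le hGrM₀; omega
        -- two unmatched vertices
        have hsd : 2 ≤ (vset E \ vset M₀).card := by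
          have h1 := Finset.card_sdiff_add_card_inter (vset E) (vset M₀)
          have h2 : (vset E ∩ vset M₀).card ≤ 2 * m + 2 :=
            le_trans (Finset.card_le_card Finset.inter_subset_right) hvsetM₀
          omega
        obtain ⟨u, hu, u', hu', huu'⟩ := Finset.one_lt_card.mp (by omega : 1 < (vset E \ vset M₀).card)
        have huE : u ∈ vset E := (Finset.mem_sdiff.mp hu).1
        have huM : u ∉ vset M₀ := (Finset.mem_sdiff.mp hu).2
        have hu'E : u' ∈ vset E := (Finset.mem_sdiff.mp hu').1
        have hu'M : u' ∉ vset M₀ := (Finset.mem_sdiff.mp hu').2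
        have hdegsum : deg E u + deg E u' ≤ 2 * (m + 1) := by
          have := degree_sum_le hE hM₀ hmax huM hu'M huu'
          omega
        -- the main construction given a low-degree supported vertex
        have main : ∀ z : V, z ∈ vset E → deg E z ≤ m + 1 →
            2 * (E.card : ℤ) ≤ max ((2 * (m+1) * (2 * (m+1) + 1) : ℤ))
              ((m+1) * ((m+1) - 1) + 2 * (m+1) * ((n : ℤ) - (m+1))) := by
          intro z hzE hdegz
          obtain ⟨e, he, hze⟩ := mem_vset.mp hzE
          obtain ⟨w, rfl⟩ := Sym2.mem_iff_exists.mp hze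
          have hwz : w ≠ z := by
            intro h
            exact hE _ he (by simp [Sym2.mk_isDiag_iff, h])
          have hwE : w ∈ vset E := mem_vset.mpr ⟨_, he, Sym2.mem_mk_right _ _⟩
          set E'' := del (del E z) w with hE''
          have hGr'' : Gr E'' := gr_del (gr_del hE z) w
          have hHm'' : ∀ M, IsMat E'' M → M.card ≤ m := hm_del_edge hHm he
          have hIH := IH E'' hGr'' hHm''
          set n'' := (vset E'').card with hn''
          -- n'' ≤ n - 2
          have hsub : vset E'' ⊆ ((vset E).erase w).erase z := by
            intro x hx
            obtain ⟨f, hf, hxf⟩ := mem_vset.mp hx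
            have hfE : f ∈ E := del_subset z (del_subset w hf)
            have hxz : x ≠ z := by
              rintro rfl
              exact not_mem_of_mem_del (del_subset w hf) hxf
            have hxw : x ≠ w := by
              rintro rfl
              exact not_mem_of_mem_del hf hxf
            exact Finset.mem_erase.mpr ⟨hxz, Finset.mem_erase.mpr ⟨hxw, mem_vset.mpr ⟨f, hfE, hxf⟩⟩⟩
          have hn''le : n'' + 2 ≤ n := by
            have h1 : (((vset E).erase w).erase z).card = n - 2 := by
              rw [Finset.card_erase_of_mem, Finset.card_erase_of_mem hwE]
              · omega
              · exact Finset.mem_erase.mpr ⟨Ne.symm hwz, hzE⟩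
            have h2 := Finset.card_le_card hsub
            have hwn : 1 ≤ n := Finset.card_pos.mpr ⟨w, hwE⟩
            have h3 : 2 ≤ n := by omega
            omega
          have hn''leZ : (n'' : ℤ) ≤ (n : ℤ) - 2 := by
            have := (Nat.cast_le (α := ℤ)).mpr hn''le
            push_cast at this; omega
          -- edge counts
          have hc1 : E.card = (del E z).card + deg E z := card_del hE z
          have hc2 : (del E z).card = E''.card + deg (del E z) w := card_del (gr_del hE z) w
          have hc3 : deg (del E z) w ≤ deg E w := deg_mono (del_subset z) w
          have hc4 : deg E w ≤ 2 * m + 2 := hdegall w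
          have hcZ : (E.card : ℤ) ≤ (E''.card : ℤ) + (m + 1) + (2 * m + 2) := by
            have : E.card ≤ E''.card + (m + 1) + (2 * m + 2) := by omega
            exact_mod_cast this
          rcases le_max_iff.mp hIH with h | h
          · refine le_trans ?_ (le_max_left _ _)
            have := arith3A (E.card : ℤ) (E''.card : ℤ) (m : ℤ) (Nat.cast_nonneg m) h hcZ
            push_cast
            linarith [this]
          · refine le_trans ?_ (le_max_right _ _)
            have := arith3B (E.card : ℤ) (E''.card : ℤ) (m : ℤ) (n : ℤ) (n'' : ℤ)
              (Nat.cast_nonneg m) h hcZ hn''leZ hn4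
            push_cast
            linarith [this]
        rcases le_or_gt (deg E u) (m + 1) with hle | hlt
        · exact main u huE hle
        · exact main u' hu'E (by omega)


/-- final numeric contradiction, case A -/
lemma finalA (k t N ν : ℤ) (hk : 2 ≤ k) (hν1 : 1 ≤ ν) (hνN : ν + 1 ≤ N) (h2N : 2*N ≤ k)
    (hA : 2*N^2*(k-1) ≤ t*k) (hEG : 2*t ≤ 2*ν*(2*ν+1)) : False := by
  have hN2 : 2 ≤ N := by omega
  have hk0 : (0:ℤ) ≤ k := by omega
  have m1 : ν*(2*ν+1) ≤ (N-1)*(2*N-1) := by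
    nlinarith [mul_nonneg (by omega : (0:ℤ) ≤ N-1-ν) (by omega : (0:ℤ) ≤ 2*(N-1+ν)+1)]
  have chain : 4*N^2*(k-1) ≤ 2*k*((N-1)*(2*N-1)) := by
    nlinarith [mul_nonneg hk0 (by linarith : (0:ℤ) ≤ (N-1)*(2*N-1) - ν*(2*ν+1))]
  nlinarith [mul_nonneg (by omega : (0:ℤ) ≤ k - 2*N) (by omega : (0:ℤ) ≤ 2*N),
    mul_pos (by omega : (0:ℤ) < k) (by omega : (0:ℤ) < 2*N-1)]

/-- final numeric contradiction, case B -/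
lemma finalB (k t N ν : ℤ) (hk : 2 ≤ k) (hν1 : 1 ≤ ν) (hνN : ν + 1 ≤ N) (h2N : 2*N ≤ k)
    (hB : N*(2*k-N)*(k-1) ≤ 2*t*k) (hEG : 2*t ≤ ν*(ν-1) + 2*ν*(k-ν)) : False := by
  have hN2 : 2 ≤ N := by omega
  have hk0 : (0:ℤ) ≤ k := by omega
  have m2 : ν*(2*k-ν-1) ≤ (N-1)*(2*k-N) := by
    nlinarith [mul_nonneg (by omega : (0:ℤ) ≤ N-1-ν) (by omega : (0:ℤ) ≤ 2*k-1-(N-1)-ν)]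
  have chain : N*(2*k-N)*(k-1) ≤ k*((N-1)*(2*k-N)) := by
    nlinarith [mul_nonneg hk0 (by linarith : (0:ℤ) ≤ (N-1)*(2*k-N) - ν*(2*k-ν-1))]
  nlinarith [mul_pos (by omega : (0:ℤ) < 2*k-N) (by omega : (0:ℤ) < k-N)]

end EGmatch

namespace EGmatch

set_option maxHeartbeats 2000000 in
lemma nofloor (k t ν N : ℕ) (hk2 : 2 ≤ k) (hν1 : 1 ≤ ν)
    (h2tk : 2 * t ≤ k * (k - 1))
    (hEGk : 2 * (t:ℤ) ≤ max (2 * (ν:ℤ) * (2 * ν + 1)) ((ν:ℤ) * (ν - 1) + 2 * ν * ((k:ℤ) - ν)))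
    (hcon : ν < N) (hβ0 : 0 ≤ (t:ℝ) / (k.choose 2 : ℕ)) (hβ1 : (t:ℝ) / (k.choose 2 : ℕ) ≤ 1)
    (hC2 : ((k.choose 2 : ℕ) : ℝ) = k * ((k:ℝ) - 1) / 2)
    (hCposR : (0:ℝ) < ((k.choose 2 : ℕ) : ℝ))
    (h1n : (N : ℝ) ≤ Real.sqrt ((t:ℝ) / (k.choose 2 : ℕ)) / 2 * k)
    (h2n : (N : ℝ) ≤ (1 - Real.sqrt (1 - (t:ℝ) / (k.choose 2 : ℕ))) * k) : False := by
  set C : ℝ := ((k.choose 2 : ℕ) : ℝ) with hCd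
  set β : ℝ := (t : ℝ) / C with hβ
  have hkR : (2:ℝ) ≤ k := by exact_mod_cast hk2
  -- first squared inequality
  have hsq1 : (2*N:ℝ) * (2*N) ≤ (Real.sqrt β * k) * (Real.sqrt β * k) := by
    apply mul_self_le_mul_self (by positivity)
    linarith
  have hsq1' : (4:ℝ) * N^2 ≤ β * k^2 := by
    have hss := Real.mul_self_sqrt hβ0
    nlinarith [hsq1]
  have hA : (2:ℝ) * N^2 * ((k:ℝ)-1) * k ≤ t * k * k := by
    have h4 := mul_le_mul_of_nonneg_right hsq1' (le_of_lt hCposR)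
    rw [hβ] at h4
    have hcan : (t:ℝ) / C * k^2 * C = t * k^2 := by
      rw [mul_right_comm, div_mul_cancel₀ _ (ne_of_gt hCposR)]
    nlinarith [h4, hC2]
  have hAk : (2:ℝ) * N^2 * ((k:ℝ)-1) ≤ t * k := by
    have hkpos : (0:ℝ) < k := by linarith
    have := (mul_le_mul_iff_left₀ hkpos).mp hA
    linarith
  -- 2N ≤ k
  have h2Nk : (2*N:ℝ) ≤ k := by
    have hβk : β * k^2 ≤ k^2 := by nlinarith [hβ1, sq_nonneg ((k:ℝ))]
    nlinarith [hsq1', Nat.cast_nonneg (α := ℝ) N, sq_nonneg ((2*N:ℝ) + k)]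
  -- second squared inequality
  have hkN : (0:ℝ) ≤ (k:ℝ) - N := by linarith [Nat.cast_nonneg (α := ℝ) N]
  have hsq2 : (Real.sqrt (1-β) * k) * (Real.sqrt (1-β) * k) ≤ ((k:ℝ) - N) * ((k:ℝ) - N) := by
    apply mul_self_le_mul_self (by positivity)
    linarith [h2n]
  have hsq2' : (1 - β) * k^2 ≤ ((k:ℝ) - N)^2 := by
    have hss := Real.mul_self_sqrt (by linarith : (0:ℝ) ≤ 1 - β)
    nlinarith [hsq2]
  have hB : (N:ℝ) * (2*k - N) * ((k:ℝ)-1) * k ≤ 2 * t * k * k := by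
    have h1 : (2*(k:ℝ)*N - N^2) ≤ β * k^2 := by nlinarith [hsq2']
    have h4 := mul_le_mul_of_nonneg_right h1 (le_of_lt hCposR)
    rw [hβ] at h4
    have hcan : (t:ℝ) / C * k^2 * C = t * k^2 := by
      rw [mul_right_comm, div_mul_cancel₀ _ (ne_of_gt hCposR)]
    nlinarith [h4, hC2]
  have hBk : (N:ℝ) * (2*k - N) * ((k:ℝ)-1) ≤ 2 * t * k := by
    have hkpos : (0:ℝ) < k := by linarith
    have := (mul_le_mul_iff_left₀ hkpos).mp hB
    linarith
  -- transfer to ℤ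
  have hAZ : 2 * (N:ℤ)^2 * ((k:ℤ)-1) ≤ (t:ℤ) * k := by
    have h : ((2 * N^2 * (k-1) : ℕ) : ℝ) ≤ ((t * k : ℕ) : ℝ) := by
      push_cast [Nat.cast_sub (by omega : 1 ≤ k)]
      nlinarith [hAk]
    have h2 : (2 * N^2 * (k-1) : ℕ) ≤ (t * k : ℕ) := by exact_mod_cast h
    have h3 := (Nat.cast_le (α := ℤ)).mpr h2
    push_cast [Nat.cast_sub (by omega : 1 ≤ k)] at h3
    linarith
  have h2NkZ : 2 * (N:ℤ) ≤ (k:ℤ) := by exact_mod_cast h2Nk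
  have hNk : N ≤ k := by
    have h0 : (N:ℝ) ≤ k := by linarith [Nat.cast_nonneg (α := ℝ) N]
    exact_mod_cast h0
  have hBZ : (N:ℤ) * (2*(k:ℤ) - N) * ((k:ℤ)-1) ≤ 2 * (t:ℤ) * k := by
    have h : ((N * (2*k - N) * (k-1) : ℕ) : ℝ) ≤ ((2 * t * k : ℕ) : ℝ) := by
      push_cast [Nat.cast_sub (by omega : 1 ≤ k), Nat.cast_sub (by omega : N ≤ 2*k)]
      nlinarith [hBk]
    have h2 : (N * (2*k - N) * (k-1) : ℕ) ≤ (2 * t * k : ℕ) := by exact_mod_cast h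
    have h3 := (Nat.cast_le (α := ℤ)).mpr h2
    push_cast [Nat.cast_sub (by omega : 1 ≤ k), Nat.cast_sub (by omega : N ≤ 2*k)] at h3
    linarith
  rcases le_max_iff.mp hEGk with h | h
  · exact finalA (k:ℤ) (t:ℤ) (N:ℤ) (ν:ℤ) (by exact_mod_cast hk2) (by exact_mod_cast hν1)
      (by exact_mod_cast hcon) h2NkZ hAZ h
  · exact finalB (k:ℤ) (t:ℤ) (N:ℤ) (ν:ℤ) (by exact_mod_cast hk2) (by exact_mod_cast hν1)
      (by exact_mod_cast hcon) h2NkZ hBZ h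

lemma floor_le_nu (k t ν : ℕ) (hk2 : 2 ≤ k) (hν1 : 1 ≤ ν)
    (h2tk : 2 * t ≤ k * (k - 1))
    (hEGk : 2 * (t:ℤ) ≤ max (2 * (ν:ℤ) * (2 * ν + 1)) ((ν:ℤ) * (ν - 1) + 2 * ν * ((k:ℤ) - ν))) :
    ⌊min (Real.sqrt ((t : ℝ) / (k.choose 2 : ℕ)) / 2)
        (1 - Real.sqrt (1 - (t : ℝ) / (k.choose 2 : ℕ))) * k⌋₊ ≤ ν := by
  by_contra hcon
  push_neg at hcon
  have hCpos : 0 < k.choose 2 := Nat.choose_pos hk2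
  have hCposR : (0:ℝ) < ((k.choose 2 : ℕ) : ℝ) := by exact_mod_cast hCpos
  have hC2 : ((k.choose 2 : ℕ) : ℝ) = k * ((k:ℝ) - 1) / 2 := Nat.cast_choose_two (K := ℝ) k
  have htC : (t : ℝ) ≤ ((k.choose 2 : ℕ) : ℝ) := by
    rw [hC2]
    have h5 : (2 * t : ℝ) ≤ (k : ℝ) * ((k:ℝ) - 1) := by
      have h6 := (Nat.cast_le (α := ℝ)).mpr h2tk
      push_cast [Nat.cast_sub (by omega : 1 ≤ k)] at h6
      linarith
    linarith
  have hβ0 : 0 ≤ (t:ℝ) / (k.choose 2 : ℕ) := div_nonneg (Nat.cast_nonneg t) (le_of_lt hCposR)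
  have hβ1 : (t:ℝ) / (k.choose 2 : ℕ) ≤ 1 := (div_le_one hCposR).mpr htC
  have hmin0 : 0 ≤ min (Real.sqrt ((t:ℝ) / (k.choose 2 : ℕ)) / 2)
      (1 - Real.sqrt (1 - (t:ℝ) / (k.choose 2 : ℕ))) := by
    refine le_min (by positivity) ?_
    have := Real.sqrt_le_one.mpr (by linarith : 1 - (t:ℝ) / (k.choose 2 : ℕ) ≤ 1)
    linarith
  have hNle := Nat.floor_le (mul_nonneg hmin0 (Nat.cast_nonneg k))
  refine nofloor k t ν _ hk2 hν1 h2tk hEGk hcon hβ0 hβ1 hC2 hCposR ?_ ?_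
  · exact le_trans hNle (mul_le_mul_of_nonneg_right (min_le_left _ _) (Nat.cast_nonneg k))
  · exact le_trans hNle (mul_le_mul_of_nonneg_right (min_le_right _ _) (Nat.cast_nonneg k))

end EGmatch

/-- Every graph `H` on `k` vertices with `t ≥ 1` edges contains a matching of size at
least `⌊min {√β / 2, 1 - √(1-β)} * k⌋`, where `β = t / C(k,2)`. -/
theorem matching_lower_bound {V : Type} [Fintype V] (k t : ℕ) (ht : 1 ≤ t)
    (hV : Fintype.card V = k) (H : SimpleGraph V) (hedges : H.edgeSet.ncard = t) :
    ∃ M : H.Subgraph, M.IsMatching ∧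
      ⌊min (Real.sqrt ((t : ℝ) / (k.choose 2 : ℕ)) / 2)
          (1 - Real.sqrt (1 - (t : ℝ) / (k.choose 2 : ℕ))) * k⌋₊ ≤ M.edgeSet.ncard := by
  classical
  set E : Finset (Sym2 V) := (Set.toFinite H.edgeSet).toFinset with hEdef
  have hmemE : ∀ e, e ∈ E ↔ e ∈ H.edgeSet := fun e => Set.Finite.mem_toFinset _
  have hEcard : E.card = t := by
    rw [← hedges, Set.ncard_eq_toFinset_card H.edgeSet (Set.toFinite _)]
  have hGr : EGmatch.Gr E := fun e he => H.not_isDiag_of_mem_edgeSet ((hmemE e).mp he)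
  -- maximum matching
  obtain ⟨M₀, hM₀, hmax⟩ := EGmatch.exists_max_matching E
  set ν : ℕ := M₀.card with hν
  -- nonempty edge set
  have hEne : E.Nonempty := by
    rw [← Finset.card_pos, hEcard]; omega
  obtain ⟨e₀, he₀⟩ := hEne
  have hν1 : 1 ≤ ν := by
    have := hmax {e₀} (EGmatch.isMat_singleton he₀)
    simpa using this
  -- k ≥ 2
  have hk2 : 2 ≤ k := by
    obtain ⟨a, b⟩ := e₀
    have hab : a ≠ b := by
      have := hGr _ he₀
      rwa [Sym2.mk_isDiag_iff] at this
    rw [← hV]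
    exact Fintype.one_lt_card_iff_nontrivial.mpr ⟨a, b, hab⟩
  -- the subgraph
  have hM₀E : ∀ {a b : V}, s(a,b) ∈ M₀ → H.Adj a b := fun h =>
    (H.mem_edgeSet).mp ((hmemE _).mp (hM₀.1 h))
  refine ⟨{ verts := ↑(EGmatch.vset M₀),
            Adj := fun a b => s(a,b) ∈ M₀,
            adj_sub := fun h => hM₀E h,
            edge_vert := fun h => by
              exact Finset.mem_coe.mpr (EGmatch.mem_vset.mpr ⟨_, h, Sym2.mem_mk_left _ _⟩),
            symm := ⟨fun a b hab => by
              change s(a,b) ∈ M₀ at hab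
              change s(b,a) ∈ M₀
              rwa [Sym2.eq_swap] at hab⟩ }, ?_, ?_⟩
  · -- IsMatching
    intro v hv
    obtain ⟨e, he, hve⟩ := EGmatch.mem_vset.mp (Finset.mem_coe.mp hv)
    obtain ⟨w, rfl⟩ := Sym2.mem_iff_exists.mp hve
    refine ⟨w, he, ?_⟩
    intro y hy
    simp only at hy
    by_cases hef : s(v, y) = s(v, w)
    · exact (Sym2.congr_right).mp hef
    · exact absurd (Sym2.mem_mk_left v w) (hM₀.2 _ hy _ he hef v (Sym2.mem_mk_left v y))
  · -- the size bound
    have hedgeSet : ∀ (Msub : H.Subgraph), Msub.Adj = (fun a b => s(a,b) ∈ M₀) →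
        Msub.edgeSet = ↑M₀ := by
      intro Msub hAdj
      ext e
      induction e with
      | _ a b =>
        rw [SimpleGraph.Subgraph.mem_edgeSet, hAdj]
        simp
    rw [hedgeSet _ rfl, Set.ncard_coe_finset, ← hν]
    -- reduce to numeric lemma
    have h2t : 2 * E.card ≤ (EGmatch.vset E).card * ((EGmatch.vset E).card - 1) :=
      EGmatch.two_mul_card_le hGr
    have hvsetk : (EGmatch.vset E).card ≤ k := by
      rw [← hV]
      exact le_trans (Finset.card_le_card (Finset.subset_univ _)) (le_of_eq Finset.card_univ)
    have h2tk : 2 * t ≤ k * (k - 1) := by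
      rw [← hEcard]
      calc 2 * E.card ≤ (EGmatch.vset E).card * ((EGmatch.vset E).card - 1) := h2t
        _ ≤ k * (k - 1) := Nat.mul_le_mul hvsetk (by omega)
    have hEG := EGmatch.core (V := V) ν E hGr (fun M hM => hmax M hM)
    have hEGk : 2 * (t:ℤ) ≤ max (2 * (ν:ℤ) * (2 * ν + 1)) ((ν:ℤ) * (ν - 1) + 2 * ν * ((k:ℤ) - ν)) := by
      rw [← hEcard]
      refine le_trans hEG (max_le_max le_rfl ?_)
      have hle : ((EGmatch.vset E).card : ℤ) ≤ (k : ℤ) := by exact_mod_cast hvsetk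
      have hν0 : (0:ℤ) ≤ (ν:ℤ) := Int.natCast_nonneg ν
      nlinarith [hle, hν0]
    exact EGmatch.floor_le_nu k t ν hk2 hν1 h2tk hEGk
end

section
/- For every k and 0 < β ≤ 1 with β·C(k,2) an integer, there exists a graph on k vertices with exactly β·C(k,2) edges whose maximum matching has size at most ⌊min{√β/2, 1 − √(1−β)}·k⌋ + 1. -/
open Finset


section helpers
variable {V : Type*} {G : SimpleGraph V} {M : G.Subgraph}

lemma mem_edge_adj {e : Sym2 V} {v : V} (he : e ∈ M.edgeSet) (hv : v ∈ e) :
    ∃ w, M.Adj v w ∧ e = s(v, w) := by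
  induction e with
  | _ a b =>
    rw [SimpleGraph.Subgraph.mem_edgeSet] at he
    rcases Sym2.mem_iff.mp hv with rfl | rfl
    · exact ⟨b, he, rfl⟩
    · exact ⟨a, he.symm, Sym2.eq_swap⟩

lemma matching_eq_of_mem (hM : M.IsMatching) {e f : Sym2 V} (he : e ∈ M.edgeSet)
    (hf : f ∈ M.edgeSet) {v : V} (hve : v ∈ e) (hvf : v ∈ f) : e = f := by
  obtain ⟨w, hw, rfl⟩ := mem_edge_adj he hve
  obtain ⟨x, hx, rfl⟩ := mem_edge_adj hf hvf
  have hv : v ∈ M.verts := M.edge_vert hw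
  obtain ⟨y, -, hy⟩ := hM hv
  rw [hy w hw, hy x hx]

lemma matching_card_le_cover [Fintype V] (hM : M.IsMatching) (S : Finset V)
    (hS : ∀ e ∈ G.edgeSet, ∃ v ∈ S, v ∈ e) : M.edgeSet.ncard ≤ S.card := by
  classical
  rw [← Set.ncard_coe_finset S]
  have hmem : ∀ e ∈ M.edgeSet, ∃ v ∈ S, v ∈ e := fun e he =>
    hS e (M.edgeSet_subset he)
  apply Set.ncard_le_ncard_of_injOn
    (fun e => if h : ∃ v ∈ S, v ∈ e then h.choose else Quot.out e |>.1)
  · intro e he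
    rw [dif_pos (hmem e he)]
    exact (hmem e he).choose_spec.1
  · intro e₁ h₁ e₂ h₂ heq
    dsimp only at heq
    rw [dif_pos (hmem e₁ h₁), dif_pos (hmem e₂ h₂)] at heq
    exact matching_eq_of_mem hM h₁ h₂ (hmem e₁ h₁).choose_spec.2
      (heq ▸ (hmem e₂ h₂).choose_spec.2)

lemma sym2_inf_mem [LinearOrder V] (e : Sym2 V) : e.inf ∈ e := by
  induction e with
  | _ a b =>
    rw [Sym2.inf_mk, Sym2.mem_iff]
    rcases le_total a b with h | h
    · left; exact inf_eq_left.mpr h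
    · right; exact inf_eq_right.mpr h

lemma sym2_sup_mem [LinearOrder V] (e : Sym2 V) : e.sup ∈ e := by
  induction e with
  | _ a b =>
    rw [Sym2.sup_mk, Sym2.mem_iff]
    rcases le_total a b with h | h
    · right; exact sup_eq_right.mpr h
    · left; exact sup_eq_left.mpr h

lemma sym2_isDiag_of_inf_eq_sup [LinearOrder V] {e : Sym2 V} (h : e.inf = e.sup) :
    e.IsDiag := by
  induction e with
  | _ a b =>
    rw [Sym2.inf_mk, Sym2.sup_mk] at h
    have hab : a = b := le_antisymm
      (le_trans le_sup_left (h ▸ inf_le_right))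
      (le_trans le_sup_right (h ▸ inf_le_left))
    simp [hab]

lemma two_mul_matching_card_le [Fintype V] [LinearOrder V] (hM : M.IsMatching) (S : Finset V)
    (hS : ∀ e ∈ G.edgeSet, ∀ v ∈ e, v ∈ S) : 2 * M.edgeSet.ncard ≤ S.card := by
  classical
  have hfin : M.edgeSet.Finite := Set.toFinite _
  have hcard : M.edgeSet.ncard = hfin.toFinset.card := Set.ncard_eq_toFinset_card _ hfin
  set F := hfin.toFinset with hF
  have key : (F ×ˢ ({false, true} : Finset Bool)).card ≤ S.card := by
    apply Finset.card_le_card_of_injOn (fun p => if p.2 then p.1.sup else p.1.inf)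
    · rintro ⟨e, b⟩ hp
      rw [Finset.mem_coe, Finset.mem_product] at hp
      have heG : e ∈ G.edgeSet := M.edgeSet_subset (hfin.mem_toFinset.mp hp.1)
      cases b
      · exact hS e heG _ (sym2_inf_mem e)
      · exact hS e heG _ (sym2_sup_mem e)
    · rintro ⟨e₁, b₁⟩ h₁ ⟨e₂, b₂⟩ h₂ heq
      simp only [Finset.coe_product, Set.mem_prod, Finset.mem_coe] at h₁ h₂
      have he₁ : e₁ ∈ M.edgeSet := hfin.mem_toFinset.mp h₁.1
      have he₂ : e₂ ∈ M.edgeSet := hfin.mem_toFinset.mp h₂.1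
      have hv₁ : (if b₁ then e₁.sup else e₁.inf) ∈ e₁ := by
        cases b₁ <;> simp [sym2_inf_mem, sym2_sup_mem]
      have hv₂ : (if b₂ then e₂.sup else e₂.inf) ∈ e₂ := by
        cases b₂ <;> simp [sym2_inf_mem, sym2_sup_mem]
      have hee : e₁ = e₂ := matching_eq_of_mem hM he₁ he₂ hv₁ (by
        simpa only [heq] using hv₂)
      subst hee
      have hnd : ¬ e₁.IsDiag := G.not_isDiag_of_mem_edgeSet (M.edgeSet_subset he₁)
      have hbb : b₁ = b₂ := by
        by_contra hne
        apply hnd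
        apply sym2_isDiag_of_inf_eq_sup
        cases b₁ <;> cases b₂ <;> simp_all
      simp [hbb]
  rw [hcard]
  calc 2 * F.card = (F ×ˢ ({false, true} : Finset Bool)).card := by
        rw [Finset.card_product]; simp [mul_comm]
    _ ≤ S.card := key
end helpers

lemma construct_graph (k t : ℕ) (p q : ℕ → ℕ)
    (hpk : ∀ n, n < t → p n < k) (hqp : ∀ n, n < t → q n < p n)
    (hinj : ∀ m, m < t → ∀ n, n < t → p m = p n → q m = q n → m = n) :
    ∃ H : SimpleGraph (Fin k), H.edgeSet.ncard = t ∧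
      ∀ e ∈ H.edgeSet, ∃ n, n < t ∧ ∃ a b : Fin k,
        e = s(a, b) ∧ (a : ℕ) = p n ∧ (b : ℕ) = q n := by
  classical
  set E : Finset (Sym2 (Fin k)) := (Finset.range t).attach.image
    (fun n => s((⟨p n.1, hpk n.1 (Finset.mem_range.mp n.2)⟩ : Fin k),
       (⟨q n.1, lt_trans (hqp n.1 (Finset.mem_range.mp n.2))
         (hpk n.1 (Finset.mem_range.mp n.2))⟩ : Fin k))) with hE
  have hcard : E.card = t := by
    rw [hE, Finset.card_image_of_injOn, Finset.card_attach, Finset.card_range]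
    rintro ⟨m, hm⟩ - ⟨n, hn⟩ - heq
    rw [Finset.mem_range] at hm hn
    dsimp only at heq
    rw [Sym2.eq_iff] at heq
    rcases heq with ⟨h1, h2⟩ | ⟨h1, h2⟩
    · have hp : p m = p n := congrArg Fin.val h1
      have hq : q m = q n := congrArg Fin.val h2
      exact Subtype.ext (hinj m hm n hn hp hq)
    · have hp : p m = q n := congrArg Fin.val h1
      have hq : q m = p n := congrArg Fin.val h2
      have := hqp m hm
      have := hqp n hn
      omega
  have hnd : ∀ e ∈ E, ¬ e.IsDiag := by
    rintro e he
    rw [hE, Finset.mem_image] at he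
    obtain ⟨⟨n, hn⟩, -, rfl⟩ := he
    rw [Finset.mem_range] at hn
    rw [Sym2.isDiag_iff_proj_eq]
    intro hcon
    have : p n = q n := congrArg Fin.val hcon
    have := hqp n hn
    omega
  refine ⟨SimpleGraph.fromEdgeSet ↑E, ?_, ?_⟩
  · rw [SimpleGraph.edgeSet_fromEdgeSet]
    have : (↑E : Set (Sym2 (Fin k))) \ {e | e.IsDiag} = ↑E := by
      ext e
      simp only [Set.mem_diff, Set.mem_setOf_eq, Finset.mem_coe, and_iff_left_iff_imp]
      exact fun he => hnd e he
    rw [show Sym2.diagSet = {e : Sym2 (Fin k) | e.IsDiag} from rfl, this, Set.ncard_coe_finset, hcard]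
  · intro e he
    rw [SimpleGraph.edgeSet_fromEdgeSet, Set.mem_diff] at he
    have := he.1
    rw [Finset.mem_coe, hE, Finset.mem_image] at this
    obtain ⟨⟨n, hn⟩, -, rfl⟩ := this
    rw [Finset.mem_range] at hn
    exact ⟨n, hn, _, _, rfl, rfl, rfl⟩

def dA (n : ℕ) : ℕ := Nat.findGreatest (fun i => i.choose 2 ≤ n) (n+1)

lemma one_le_dA (n : ℕ) : 1 ≤ dA n :=
  Nat.le_findGreatest (by omega) (by simp)

lemma choose_succ_two (m : ℕ) : (m + 1).choose 2 = m + m.choose 2 := by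
  rw [Nat.choose_succ_succ]
  simp [Nat.choose_one_right]

lemma dA_spec (n : ℕ) : (dA n).choose 2 ≤ n :=
  Nat.findGreatest_spec (P := fun i => i.choose 2 ≤ n) (m := 0) (by omega) (by simp)

lemma dA_lt (n : ℕ) : n < (dA n + 1).choose 2 := by
  by_contra hcon
  push_neg at hcon
  rcases le_or_gt (dA n + 1) (n + 1) with h | h
  · exact Nat.findGreatest_is_greatest (lt_add_one _) h hcon
  · have hle : dA n ≤ n + 1 := Nat.findGreatest_le _
    have heq : dA n = n + 1 := by omega
    rw [heq] at hcon
    rw [choose_succ_two (n+1)] at hcon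
    omega

lemma dA_mono {n m : ℕ} (h : n ≤ m) : dA n ≤ dA m :=
  Nat.findGreatest_mono (fun i hi => le_trans hi h) (by omega)

def fB (k j : ℕ) : ℕ := ∑ x ∈ Finset.range j, (k - 1 - x)

lemma fB_succ (k j : ℕ) : fB k (j+1) = fB k j + (k - 1 - j) :=
  Finset.sum_range_succ _ _

lemma fB_add_choose (k : ℕ) : ∀ j, fB k j + (k - j).choose 2 = k.choose 2 := by
  intro j
  induction j with
  | zero => simp [fB]
  | succ j ih =>
    rw [fB_succ]
    have key : (k - 1 - j) + (k - (j+1)).choose 2 = (k - j).choose 2 := by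
      rcases le_or_gt k (j + 1) with h | h
      · have h1 : k - 1 - j = 0 := by omega
        have h2 : k - (j+1) = 0 := by omega
        rcases le_or_gt k j with h3 | h3
        · have : k - j = 0 := by omega
          simp [h1, h2, this]
        · have : k - j = 1 := by omega
          simp [h1, h2, this]
      · obtain ⟨m, hm⟩ : ∃ m, k - 1 - j = m := ⟨_, rfl⟩
        have h1 : k - j = m + 1 := by omega
        have h2 : k - (j+1) = m := by omega
        rw [hm, h1, h2, choose_succ_two]
    omega
  
lemma fB_last (k : ℕ) (hk : 1 ≤ k) : fB k (k-1) = k.choose 2 := by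
  have := fB_add_choose k (k-1)
  have h1 : k - (k-1) = 1 := by omega
  rw [h1] at this
  simpa using this

def dB (k n : ℕ) : ℕ := Nat.findGreatest (fun j => fB k j ≤ n) (k-1)

lemma dB_spec (k n : ℕ) : fB k (dB k n) ≤ n :=
  Nat.findGreatest_spec (P := fun j => fB k j ≤ n) (m := 0) (by omega) (by simp [fB])

lemma dB_lt_pred (k n : ℕ) (hk : 1 ≤ k) (hn : n < k.choose 2) : dB k n < k - 1 := by
  by_contra hcon
  push_neg at hcon
  have hle : dB k n ≤ k - 1 := Nat.findGreatest_le _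
  have heq : dB k n = k - 1 := le_antisymm hle hcon
  have := dB_spec k n
  rw [heq, fB_last k hk] at this
  omega

lemma dB_succ_gt (k n : ℕ) (hk : 1 ≤ k) (hn : n < k.choose 2) : n < fB k (dB k n + 1) := by
  by_contra hcon
  push_neg at hcon
  exact Nat.findGreatest_is_greatest (P := fun j => fB k j ≤ n)
    (lt_add_one _) (by have := dB_lt_pred k n hk hn; exact by unfold dB at *; omega) hcon

lemma dB_mono (k : ℕ) {n m : ℕ} (h : n ≤ m) : dB k n ≤ dB k m :=
  Nat.findGreatest_mono (fun j hj => le_trans hj h) le_rfl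

lemma fB_real (k : ℕ) : ∀ j, j ≤ k - 1 → (fB k j : ℝ) * 2 = j * (2*k - 1 - j) := by
  intro j
  induction j with
  | zero => simp [fB]
  | succ j ih =>
    intro hj
    have hj' : j ≤ k - 1 := by omega
    have hk : 1 ≤ k := by omega
    rw [fB_succ]
    have hcast : ((k - 1 - j : ℕ) : ℝ) = (k : ℝ) - 1 - j := by
      have h1 : j ≤ k - 1 := hj'
      push_cast [Nat.cast_sub (by omega : j ≤ k - 1), Nat.cast_sub hk]
      ring
    push_cast
    rw [hcast]
    have := ih hj'
    push_cast at this
    ring_nf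
    ring_nf at this
    nlinarith [this]
-- assumes fB, fB_real available (concat test)
lemma caseB_numeric (k t u : ℕ) (β γ : ℝ) (hβ0 : 0 < β) (hβ1 : β ≤ 1)
    (ht : (t : ℝ) = β * (k.choose 2 : ℕ)) (hγ : γ = Real.sqrt (1 - β))
    (hk2 : 2 ≤ k) (huk : u ≤ k - 2) (hfBu : fB k u < t) :
    (u:ℝ) ≤ (1 - γ) * k := by
  have hC : ((k.choose 2 : ℕ) : ℝ) = k * (k - 1) / 2 := Nat.cast_choose_two (K := ℝ) k
  have hk2r : (2:ℝ) ≤ (k:ℝ) := by exact_mod_cast hk2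
  have hfr : (fB k u : ℝ) * 2 = (u:ℝ) * (2*(k:ℝ) - 1 - u) := fB_real k u (by omega)
  have hft : (fB k u : ℝ) < (t:ℝ) := by exact_mod_cast hfBu
  have hγ0 : 0 ≤ γ := hγ ▸ Real.sqrt_nonneg _
  have hγ1 : γ ≤ 1 := hγ ▸ Real.sqrt_le_one.mpr (by linarith)
  have hγsq : γ * γ = 1 - β := hγ ▸ Real.mul_self_sqrt (by linarith)
  have h2t : 2 * (t:ℝ) = β * (k:ℝ) * (k:ℝ) - β * (k:ℝ) := by rw [ht, hC]; ring
  have hukr : (u:ℝ) ≤ (k:ℝ) - 2 := by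
    have h1 : (u:ℝ) ≤ ((k - 2 : ℕ) : ℝ) := by exact_mod_cast huk
    have h2 : ((k - 2 : ℕ) : ℝ) = (k:ℝ) - 2 := by push_cast [Nat.cast_sub hk2]; ring
    rw [h2] at h1; exact h1
  have hu0 : (0:ℝ) ≤ (u:ℝ) := Nat.cast_nonneg _
  by_contra hcon
  push_neg at hcon
  have hpos : (0:ℝ) < 2*(k:ℝ) - 1 - (u:ℝ) - (1 - γ)*k := by nlinarith
  have hkey : (0:ℝ) ≤ ((u:ℝ) - (1 - γ)*k) * (2*(k:ℝ) - 1 - (u:ℝ) - (1 - γ)*k) :=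
    mul_nonneg (by linarith) hpos.le
  nlinarith [hkey, hγsq, hγ0, hγ1, hfr, hft, h2t, hcon, hk2r]
/-- For every `k` and `0 < β ≤ 1` with `β * C(k,2)` an integer, there exists a graph on
`k` vertices with exactly `β * C(k,2)` edges whose maximum matching has size at most
`⌊min {√β / 2, 1 - √(1-β)} * k⌋ + 1`. -/

theorem exists_graph_small_matching (k t : ℕ) (β : ℝ) (hβ0 : 0 < β) (hβ1 : β ≤ 1)
    (ht : (t : ℝ) = β * (k.choose 2 : ℕ)) :
    ∃ H : SimpleGraph (Fin k), H.edgeSet.ncard = t ∧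
      ∀ M : H.Subgraph, M.IsMatching →
        M.edgeSet.ncard ≤ ⌊min (Real.sqrt β / 2) (1 - Real.sqrt (1 - β)) * k⌋₊ + 1 := by
  classical
  rcases Nat.eq_zero_or_pos t with rfl | ht0
  · refine ⟨⊥, by simp, ?_⟩
    intro M hM
    have hsub : M.edgeSet ⊆ (⊥ : SimpleGraph (Fin k)).edgeSet := M.edgeSet_subset
    rw [SimpleGraph.edgeSet_bot] at hsub
    have : M.edgeSet = ∅ := Set.eq_empty_of_subset_empty hsub
    simp [this]
  have hC : ((k.choose 2 : ℕ) : ℝ) = k * (k - 1) / 2 := Nat.cast_choose_two (K := ℝ) k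
  have htle : t ≤ k.choose 2 := by
    have h1 : (t : ℝ) ≤ ((k.choose 2 : ℕ) : ℝ) := by
      rw [ht]
      nlinarith [(Nat.cast_nonneg (k.choose 2) : (0:ℝ) ≤ (k.choose 2 : ℕ))]
    exact_mod_cast h1
  have hk2 : 2 ≤ k := by
    by_contra h
    push_neg at h
    have : k.choose 2 = 0 := Nat.choose_eq_zero_of_lt (by omega)
    omega
  have hk2r : (2:ℝ) ≤ (k:ℝ) := by exact_mod_cast hk2
  rcases le_total (Real.sqrt β / 2) (1 - Real.sqrt (1 - β)) with hmin | hmin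
  · -- Case A : clique construction
    rw [min_eq_left hmin]
    have hpk : ∀ n, n < t → dA n < k := by
      intro n hn
      by_contra h
      push_neg at h
      have h1 : k.choose 2 ≤ (dA n).choose 2 := Nat.choose_le_choose 2 h
      have h2 := dA_spec n
      omega
    have hqp : ∀ n, n < t → n - (dA n).choose 2 < dA n := by
      intro n hn
      have h1 := dA_spec n
      have h2 := dA_lt n
      rw [choose_succ_two] at h2
      omega
    obtain ⟨H, hcard, hchar⟩ := construct_graph k t dA (fun n => n - (dA n).choose 2)
      hpk hqp (by
        intro m hm n hn hp hq
        have h1 := dA_spec m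
        have h2 := dA_spec n
        have h3 : (dA m).choose 2 = (dA n).choose 2 := by rw [hp]
        omega)
    refine ⟨H, hcard, ?_⟩
    intro M hM
    set K := dA (t - 1) with hK
    set S : Finset (Fin k) := Finset.univ.filter (fun v : Fin k => (v : ℕ) ≤ K) with hS
    have hScard : S.card ≤ K + 1 := by
      have h : S.card ≤ (Finset.range (K + 1)).card := by
        apply Finset.card_le_card_of_injOn (fun v : Fin k => (v : ℕ))
        · intro v hv
          rw [hS, Finset.mem_coe, Finset.mem_filter] at hv
          simp only [Finset.mem_coe, Finset.mem_range]; omega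
        · exact fun a _ b _ hab => Fin.val_injective hab
      simpa using h
    have hsupp : ∀ e ∈ H.edgeSet, ∀ v ∈ e, v ∈ S := by
      intro e he v hv
      obtain ⟨n, hn, a, b, rfl, ha, hb⟩ := hchar e he
      have hdA : dA n ≤ K := dA_mono (by omega)
      have hq := hqp n hn
      rw [hS, Finset.mem_filter]
      refine ⟨Finset.mem_univ _, ?_⟩
      rcases Sym2.mem_iff.mp hv with rfl | rfl <;> omega
    have h2m : 2 * M.edgeSet.ncard ≤ K + 1 :=
      le_trans (two_mul_matching_card_le hM S hsupp) hScard
    -- numeric part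
    have hK1 : 1 ≤ K := one_le_dA _
    have hKt : K.choose 2 < t := by have := dA_spec (t - 1); rw [← hK] at this; omega
    have hreal : (K:ℝ) * ((K:ℝ) - 1) < β * k * k := by
      have h1 : ((K.choose 2 : ℕ) : ℝ) < (t : ℝ) := by exact_mod_cast hKt
      rw [Nat.cast_choose_two, ht, hC] at h1
      nlinarith [hβ0.le, hk2r]
    have hx : (K:ℝ) ≤ Real.sqrt β * k + 1 := by
      by_contra hcon
      push_neg at hcon
      have hs0 : 0 ≤ Real.sqrt β * k := mul_nonneg (Real.sqrt_nonneg _) (Nat.cast_nonneg _)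
      have hsq : (Real.sqrt β * k) * (Real.sqrt β * k) = β * k * k := by
        have := Real.mul_self_sqrt hβ0.le
        nlinarith [this]
      have hK1r : (1:ℝ) ≤ (K:ℝ) := by exact_mod_cast hK1
      nlinarith
    have hmr : (M.edgeSet.ncard : ℝ) ≤ Real.sqrt β / 2 * k + 1 := by
      have h2 : 2 * (M.edgeSet.ncard : ℝ) ≤ (K:ℝ) + 1 := by exact_mod_cast h2m
      linarith
    have hfl : (M.edgeSet.ncard : ℝ) < (⌊Real.sqrt β / 2 * (k:ℝ)⌋₊ : ℝ) + 2 := by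
      have := Nat.lt_floor_add_one (Real.sqrt β / 2 * (k:ℝ))
      linarith
    have : M.edgeSet.ncard < ⌊Real.sqrt β / 2 * (k:ℝ)⌋₊ + 2 := by exact_mod_cast hfl
    omega
  · -- Case B : split construction
    rw [min_eq_right hmin]
    have hk1 : 1 ≤ k := by omega
    have hnn : ∀ n, n < t → n < k.choose 2 := fun n hn => by omega
    have hpk : ∀ n, n < t → dB k n + 1 + (n - fB k (dB k n)) < k := by
      intro n hn
      have h1 := dB_spec k n
      have h2 := dB_succ_gt k n hk1 (hnn n hn)
      have h3 := dB_lt_pred k n hk1 (hnn n hn)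
      have h4 := fB_succ k (dB k n)
      omega
    obtain ⟨H, hcard, hchar⟩ := construct_graph k t
      (fun n => dB k n + 1 + (n - fB k (dB k n))) (fun n => dB k n)
      hpk (fun n _ => by omega) (by
        intro m hm n hn hp hq
        have h1 := dB_spec k m
        have h2 := dB_spec k n
        have h3 : fB k (dB k m) = fB k (dB k n) := by rw [hq]
        omega)
    refine ⟨H, hcard, ?_⟩
    intro M hM
    obtain ⟨u, hu⟩ : ∃ u, u = dB k (t - 1) := ⟨_, rfl⟩
    set S : Finset (Fin k) := Finset.univ.filter (fun v : Fin k => (v : ℕ) ≤ u) with hS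
    have hScard : S.card ≤ u + 1 := by
      have h : S.card ≤ (Finset.range (u + 1)).card := by
        apply Finset.card_le_card_of_injOn (fun v : Fin k => (v : ℕ))
        · intro v hv
          rw [hS, Finset.mem_coe, Finset.mem_filter] at hv
          simp only [Finset.mem_coe, Finset.mem_range]; omega
        · exact fun a _ b _ hab => Fin.val_injective hab
      simpa using h
    have hcover : ∀ e ∈ H.edgeSet, ∃ v ∈ S, v ∈ e := by
      intro e he
      obtain ⟨n, hn, a, b, rfl, ha, hb⟩ := hchar e he
      refine ⟨b, ?_, Sym2.mem_mk_right a b⟩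
      rw [hS, Finset.mem_filter]
      refine ⟨Finset.mem_univ _, ?_⟩
      have h5 := dB_mono (n := n) (m := t - 1) k (by omega)
      rw [← hu] at h5
      omega
    have hm : M.edgeSet.ncard ≤ u + 1 :=
      le_trans (matching_card_le_cover hM S hcover) hScard
    -- numeric part
    have huk : u ≤ k - 2 := by
      have := dB_lt_pred k (t - 1) hk1 (by omega)
      rw [← hu] at this; omega
    have hfBu : fB k u < t := by have := dB_spec k (t - 1); rw [← hu] at this; omega
    have hueq : (u:ℝ) ≤ (1 - Real.sqrt (1 - β)) * k :=
      caseB_numeric k t u β (Real.sqrt (1 - β)) hβ0 hβ1 ht rfl hk2 huk hfBu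
    have hufl : u ≤ ⌊(1 - Real.sqrt (1 - β)) * (k:ℝ)⌋₊ := Nat.le_floor hueq
    omega
end

section
/- Let 1 ≤ δ < 2, r = 2/(2−δ), ℓ ≥ 2, and s_i = (r^i − 1)/(r^ℓ − 1). For every 1 ≤ i ≤ ℓ−1: 2·((2−δ)√(1−s_i) + δ − 1)/(1 − s_{i−1}) ≤ 2 − δ/(r^ℓ − r^{i−1}) ≤ 2 − δ·r^{−ℓ}. -/
/-- For `1 ≤ δ < 2`, `r = 2/(2-δ)`, `ℓ ≥ 2`, `s_i = (r^i - 1)/(r^ℓ - 1)`, and every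
`1 ≤ i ≤ ℓ-1`:
`2 * ((2-δ)√(1-s_i) + δ - 1)/(1 - s_{i-1}) ≤ 2 - δ/(r^ℓ - r^{i-1}) ≤ 2 - δ * r^{-ℓ}`. -/
theorem middle_rounds_bound (δ : ℝ) (hδ1 : 1 ≤ δ) (hδ2 : δ < 2) (ℓ : ℕ) (hℓ : 2 ≤ ℓ)
    (r : ℝ) (hr : r = 2 / (2 - δ))
    (s : ℕ → ℝ) (hs : ∀ i, s i = (r ^ i - 1) / (r ^ ℓ - 1)) :
    ∀ i, 1 ≤ i → i ≤ ℓ - 1 →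
      2 * ((2 - δ) * Real.sqrt (1 - s i) + δ - 1) / (1 - s (i - 1))
          ≤ 2 - δ / (r ^ ℓ - r ^ (i - 1)) ∧
      2 - δ / (r ^ ℓ - r ^ (i - 1)) ≤ 2 - δ / r ^ ℓ := by
  have hδ0 : (0:ℝ) < 2 - δ := by linarith
  have hr2 : (2:ℝ) ≤ r := by
    rw [hr, le_div_iff₀ hδ0]; nlinarith
  have hr1 : (1:ℝ) < r := by linarith
  have hrδ : (2 - δ) * r = 2 := by
    rw [hr]; field_simp
  intro i hi1 hi2
  have hiℓ : i < ℓ := by omega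
  have hi1ℓ : i - 1 < ℓ := by omega
  have hpow : r ^ (i - 1) < r ^ ℓ := pow_lt_pow_right₀ hr1 hi1ℓ
  have hpowi : r ^ i < r ^ ℓ := pow_lt_pow_right₀ hr1 hiℓ
  have h1p : (1:ℝ) ≤ r ^ (i - 1) := one_le_pow₀ (by linarith)
  have h1pi : (1:ℝ) ≤ r ^ i := one_le_pow₀ (by linarith)
  have hQ : (0:ℝ) < r ^ ℓ - r ^ (i - 1) := by linarith
  have hP : (0:ℝ) < r ^ ℓ - 1 := by linarith
  have hkey : (2 - δ) * r ^ i = 2 * r ^ (i - 1) := by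
    have hie : r ^ i = r ^ (i - 1) * r := by
      rw [← pow_succ]; congr 1; omega
    rw [hie]
    linear_combination r ^ (i - 1) * hrδ
  have hsi : s i * (r ^ ℓ - 1) = r ^ i - 1 := by
    rw [hs]; field_simp
  have hsi0 : 0 ≤ s i := by
    rw [hs]; exact div_nonneg (by linarith) hP.le
  have hsi1 : s i ≤ 1 := by
    rw [hs, div_le_one hP]; linarith
  set A := Real.sqrt (1 - s i) with hA
  have hA0 : 0 ≤ A := Real.sqrt_nonneg _
  have hA2 : A ^ 2 = 1 - s i := Real.sq_sqrt (by linarith)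
  have hA_le : A ≤ 1 - s i / 2 := by nlinarith [sq_nonneg (A - (1 - s i / 2))]
  have hs' : 1 - s (i - 1) = (r ^ ℓ - r ^ (i - 1)) / (r ^ ℓ - 1) := by
    rw [hs]; field_simp; ring
  constructor
  · rw [hs', div_div_eq_mul_div, div_le_iff₀ hQ]
    have hRHS : (2 - δ / (r ^ ℓ - r ^ (i - 1))) * (r ^ ℓ - r ^ (i - 1))
        = 2 * (r ^ ℓ - r ^ (i - 1)) - δ := by
      field_simp
    rw [hRHS]
    have h1 : (2 - δ) * A * (r ^ ℓ - 1) ≤ (2 - δ) * (1 - s i / 2) * (r ^ ℓ - 1) := by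
      apply mul_le_mul_of_nonneg_right _ hP.le
      exact mul_le_mul_of_nonneg_left hA_le hδ0.le
    have h2 : (2 - δ) * (s i * (r ^ ℓ - 1)) = (2 - δ) * (r ^ i - 1) := by rw [hsi]
    nlinarith [h1, h2, hkey]
  · have h3 : δ / r ^ ℓ ≤ δ / (r ^ ℓ - r ^ (i - 1)) := by
      apply div_le_div_of_nonneg_left (by linarith) hQ (by linarith)
    linarith
end
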